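/- arXiv:2310.17237 — 8 statements merged into one kernel-verified Lean document; each statement's English description precedes it below -/
import Mathlib

section
/- Let m ≤ n < p be integers. For i = m,…,p let θ_i : ℝ → ℝ be θ_i(z) = σ_i·l(z) + (ρ/2)(z − m_i)², where ρ > 0, σ_i ≥ 0, m_i ∈ ℝ, and l : ℝ → ℝ is convex. For integers a ≤ b let h_{[a,b]}(z) = Σ_{i=a}^{b} θ_i(z); each h_{[a,b]} is ρ(b−a+1)-strongly convex and continuous, hence has a unique minimizer v_{[a,b]}. If v_{[m,n]} > v_{[n+1,p]} (i.e., the blocks [m,n] and [n+1,p] are out-of-order), then the minimizer of the merged block satisfies v_{[n+1,p]} ≤ v_{[m,p]} ≤ v_{[m,n]}. -/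
open scoped BigOperators

lemma quad_convex (c k : ℝ) (hk : 0 ≤ k) : ConvexOn ℝ Set.univ (fun z => k * (z - c)^2) := by
  refine ⟨convex_univ, ?_⟩
  intro x _ y _ a b ha hb hab
  simp only [smul_eq_mul]
  have hb1 : b = 1 - a := by linarith
  subst hb1
  nlinarith [mul_nonneg (mul_nonneg hk (mul_nonneg ha hb)) (sq_nonneg (x - y))]

lemma sum_convex (s : Finset ℤ) (f : ℤ → ℝ → ℝ)
    (hf : ∀ i ∈ s, ConvexOn ℝ Set.univ (f i)) :
    ConvexOn ℝ Set.univ (fun z => ∑ i ∈ s, f i z) := by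
  induction s using Finset.induction with
  | empty => simpa using convexOn_const 0 convex_univ
  | @insert a t hx ih =>
    simp only [Finset.sum_insert hx]
    exact (hf a (Finset.mem_insert_self a t)).add
      (ih fun i hi => hf i (Finset.mem_insert_of_mem hi))

lemma split_Icc (m n p : ℤ) (hmn : m ≤ n) (hnp : n < p) (f : ℤ → ℝ) :
    ∑ i ∈ Finset.Icc m p, f i
      = (∑ i ∈ Finset.Icc m n, f i) + ∑ i ∈ Finset.Icc (n+1) p, f i := by
  rw [← Finset.sum_union]
  · congr 1
    ext i
    simp only [Finset.mem_union, Finset.mem_Icc]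
    omega
  · rw [Finset.disjoint_left]
    intro i hi hi'
    simp only [Finset.mem_Icc] at hi hi'
    omega

lemma mono_right (f : ℝ → ℝ) (hf : ConvexOn ℝ Set.univ f) (v : ℝ)
    (hv : ∀ z, z ≠ v → f v < f z) {a b : ℝ} (hva : v ≤ a) (hab : a < b) :
    f a < f b := by
  rcases eq_or_lt_of_le hva with rfl | hva
  · exact hv b (ne_of_gt hab)
  · have hbv : b ≠ v := ne_of_gt (lt_trans hva hab)
    have hfb : f v < f b := hv b hbv
    set t : ℝ := (b - a) / (b - v) with ht
    set s : ℝ := (a - v) / (b - v) with hs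
    have hbv' : (0:ℝ) < b - v := by linarith
    have hne : b - v ≠ 0 := ne_of_gt hbv'
    have ht0 : 0 < t := div_pos (by linarith) hbv'
    have hs0 : 0 < s := div_pos (by linarith) hbv'
    have hts : t + s = 1 := by
      rw [ht, hs, ← add_div, div_eq_one_iff_eq hne]; ring
    have hcomb : t * v + s * b = a := by
      rw [ht, hs]; field_simp; ring
    have hcx := hf.2 (Set.mem_univ v) (Set.mem_univ b) ht0.le hs0.le hts
    simp only [smul_eq_mul] at hcx
    rw [hcomb] at hcx
    calc f a ≤ t * f v + s * f b := hcx
      _ < t * f b + s * f b := by nlinarith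
      _ = f b := by rw [← add_mul, hts, one_mul]

lemma mono_left (f : ℝ → ℝ) (hf : ConvexOn ℝ Set.univ f) (v : ℝ)
    (hv : ∀ z, z ≠ v → f v < f z) {a b : ℝ} (hab : a < b) (hbv : b ≤ v) :
    f b < f a := by
  have hf' : ConvexOn ℝ Set.univ (fun x => f (-x)) := by
    have := hf.comp_affineMap (-(AffineMap.id ℝ ℝ))
    simpa [Function.comp_def] using this
  have hv' : ∀ z, z ≠ -v → (fun x => f (-x)) (-v) < (fun x => f (-x)) z := by
    intro z hz
    simp only [neg_neg]
    refine hv (-z) ?_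
    intro hzz
    exact hz (by rw [← hzz, neg_neg])
  have := mono_right (fun x => f (-x)) hf' (-v) hv'
    (by linarith : -v ≤ -b) (by linarith : -b < -a)
  simpa using this

/-- **Proposition 1 (PAVA merge step).**
For `m ≤ n < p` and `θ i z = σ i * l z + (ρ/2) (z - μ i)^2` with `ρ > 0`, `σ i ≥ 0` and
`l` convex, let `h a b z = ∑_{i ∈ [a,b]} θ i z`, and let `v_{[a,b]}` denote its unique
minimizer.  If `v_{[m,n]} > v_{[n+1,p]}` (the two blocks are out-of-order), then the
minimizer of the merged block satisfies `v_{[n+1,p]} ≤ v_{[m,p]} ≤ v_{[m,n]}`. -/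
theorem pava_merge_between
    (m n p : ℤ) (hmn : m ≤ n) (hnp : n < p)
    (l : ℝ → ℝ) (hl : ConvexOn ℝ Set.univ l)
    (ρ : ℝ) (hρ : 0 < ρ)
    (σ μ : ℤ → ℝ) (hσ : ∀ i ∈ Finset.Icc m p, 0 ≤ σ i)
    (θ : ℤ → ℝ → ℝ)
    (hθ : ∀ i z, θ i z = σ i * l z + ρ / 2 * (z - μ i) ^ 2)
    (h : ℤ → ℤ → ℝ → ℝ)
    (hdef : ∀ a b z, h a b z = ∑ i ∈ Finset.Icc a b, θ i z)
    (vmn vnp vmp : ℝ)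
    (hvmn : ∀ z, z ≠ vmn → h m n vmn < h m n z)
    (hvnp : ∀ z, z ≠ vnp → h (n + 1) p vnp < h (n + 1) p z)
    (hvmp : ∀ z, z ≠ vmp → h m p vmp < h m p z)
    (horder : vnp < vmn) :
    vnp ≤ vmp ∧ vmp ≤ vmn := by
  have hθconv : ∀ i ∈ Finset.Icc m p, ConvexOn ℝ Set.univ (θ i) := by
    intro i hi
    have h1 : ConvexOn ℝ Set.univ (fun z => σ i * l z) := by
      simpa [smul_eq_mul] using hl.smul (hσ i hi)
    have h2 := quad_convex (μ i) (ρ / 2) (by linarith)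
    have e : θ i = fun z => σ i * l z + ρ / 2 * (z - μ i) ^ 2 := funext (hθ i)
    rw [e]
    exact h1.add h2
  have hsub1 : ∀ i ∈ Finset.Icc m n, i ∈ Finset.Icc m p := by
    intro i hi; simp only [Finset.mem_Icc] at *; omega
  have hsub2 : ∀ i ∈ Finset.Icc (n+1) p, i ∈ Finset.Icc m p := by
    intro i hi; simp only [Finset.mem_Icc] at *; omega
  have hconv1 : ConvexOn ℝ Set.univ (h m n) := by
    have e : h m n = fun z => ∑ i ∈ Finset.Icc m n, θ i z := funext (hdef m n)
    rw [e]
    exact sum_convex _ θ (fun i hi => hθconv i (hsub1 i hi))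
  have hconv2 : ConvexOn ℝ Set.univ (h (n+1) p) := by
    have e : h (n+1) p = fun z => ∑ i ∈ Finset.Icc (n+1) p, θ i z :=
      funext (hdef (n+1) p)
    rw [e]
    exact sum_convex _ θ (fun i hi => hθconv i (hsub2 i hi))
  have hsplit : ∀ z, h m p z = h m n z + h (n+1) p z := by
    intro z
    rw [hdef m p z, hdef m n z, hdef (n+1) p z]
    exact split_Icc m n p hmn hnp _
  constructor
  · by_contra hc
    push_neg at hc
    have h1 : h m n vnp < h m n vmp :=
      mono_left (h m n) hconv1 vmn hvmn hc horder.le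
    have h2 : h (n+1) p vnp < h (n+1) p vmp := hvnp vmp (ne_of_lt hc)
    have h3 : h m p vmp < h m p vnp := hvmp vnp (ne_of_gt hc)
    rw [hsplit vmp, hsplit vnp] at h3
    linarith
  · by_contra hc
    push_neg at hc
    have h1 : h (n+1) p vmn < h (n+1) p vmp :=
      mono_right (h (n+1) p) hconv2 vnp hvnp horder.le hc
    have h2 : h m n vmn < h m n vmp := hvmn vmp (ne_of_gt hc)
    have h3 : h m p vmp < h m p vmn := hvmp vmn (ne_of_lt hc)
    rw [hsplit vmp, hsplit vmn] at h3
    linarith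
end

section
/- Let m ≤ n < p be integers. For i = m,…,p let θ_i : ℝ → ℝ be θ_i(z) = σ_i·l(z) + (ρ/2)(z − m_i)², where ρ > 0, σ_i ≥ 0, l : ℝ → ℝ is convex and monotonically increasing, and the points m_i satisfy m_m ≤ m_{m+1} ≤ … ≤ m_p. For integers a ≤ b let v_{[a,b]} denote the unique minimizer of h_{[a,b]}(z) = Σ_{i=a}^{b} θ_i(z). If the consecutive blocks [m,n] and [n+1,p] are out-of-order, i.e., v_{[m,n]} > v_{[n+1,p]}, then (Σ_{i=m}^{n} σ_i)/(n−m+1) < (Σ_{i=n+1}^{p} σ_i)/(p−n). -/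
open scoped BigOperators

/-- **Proposition 3 (Appendix).**
For `m ≤ n < p` and `θ i z = σ i * l z + (ρ/2) (z - μ i)^2` with `ρ > 0`, `σ i ≥ 0`,
`l` convex and monotonically increasing, and `μ` nondecreasing on `[m,p]`, let
`v_{[a,b]}` denote the unique minimizer of `h a b z = ∑_{i ∈ [a,b]} θ i z`.
If the consecutive blocks `[m,n]` and `[n+1,p]` are out-of-order, i.e.
`v_{[m,n]} > v_{[n+1,p]}`, then
`(∑_{i=m}^{n} σ i)/(n-m+1) < (∑_{i=n+1}^{p} σ i)/(p-n)`. -/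
theorem pava_out_of_order_weights
    (m n p : ℤ) (hmn : m ≤ n) (hnp : n < p)
    (l : ℝ → ℝ) (hl : ConvexOn ℝ Set.univ l) (hlmono : Monotone l)
    (ρ : ℝ) (hρ : 0 < ρ)
    (σ μ : ℤ → ℝ) (hσ : ∀ i ∈ Finset.Icc m p, 0 ≤ σ i)
    (hμmono : MonotoneOn μ (Set.Icc m p))
    (θ : ℤ → ℝ → ℝ)
    (hθ : ∀ i z, θ i z = σ i * l z + ρ / 2 * (z - μ i) ^ 2)
    (h : ℤ → ℤ → ℝ → ℝ)
    (hdef : ∀ a b z, h a b z = ∑ i ∈ Finset.Icc a b, θ i z)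
    (vmn vnp : ℝ)
    (hvmn : ∀ z, z ≠ vmn → h m n vmn < h m n z)
    (hvnp : ∀ z, z ≠ vnp → h (n + 1) p vnp < h (n + 1) p z)
    (horder : vnp < vmn) :
    (∑ i ∈ Finset.Icc m n, σ i) / ((n : ℝ) - (m : ℝ) + 1)
      < (∑ i ∈ Finset.Icc (n + 1) p, σ i) / ((p : ℝ) - (n : ℝ)) := by

  -- abbreviations
  set S1 := ∑ i ∈ Finset.Icc m n, σ i with hS1
  set S2 := ∑ i ∈ Finset.Icc (n+1) p, σ i with hS2
  set M1 := ∑ i ∈ Finset.Icc m n, μ i with hM1def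
  set M2 := ∑ i ∈ Finset.Icc (n+1) p, μ i with hM2def
  set K1 := ∑ i ∈ Finset.Icc m n, (μ i)^2 with hK1def
  set K2 := ∑ i ∈ Finset.Icc (n+1) p, (μ i)^2 with hK2def
  have hc1pos : (0:ℝ) < (n:ℝ) - m + 1 := by
    have : (m:ℝ) ≤ n := by exact_mod_cast hmn
    linarith
  have hc2pos : (0:ℝ) < (p:ℝ) - n := by
    have : (n:ℝ) < p := by exact_mod_cast hnp
    linarith
  have hcard1 : ((Finset.Icc m n).card : ℝ) = (n:ℝ) - m + 1 := by
    rw [Int.card_Icc]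
    have h0 : (0:ℤ) ≤ n + 1 - m := by omega
    have h1 : ((n + 1 - m).toNat : ℝ) = ((n + 1 - m : ℤ) : ℝ) := by
      exact_mod_cast congrArg (fun x : ℤ => (x : ℝ)) (Int.toNat_of_nonneg h0)
    rw [h1]
    push_cast
    ring
  have hcard2 : ((Finset.Icc (n+1) p).card : ℝ) = (p:ℝ) - n := by
    rw [Int.card_Icc]
    have h0 : (0:ℤ) ≤ p + 1 - (n + 1) := by omega
    have h1 : ((p + 1 - (n + 1)).toNat : ℝ) = ((p + 1 - (n + 1) : ℤ) : ℝ) := by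
      exact_mod_cast congrArg (fun x : ℤ => (x : ℝ)) (Int.toNat_of_nonneg h0)
    rw [h1]
    push_cast
    ring
  -- expansion of sums of squares
  have hQ : ∀ (s : Finset ℤ) (z : ℝ), ∑ i ∈ s, (z - μ i)^2
      = (s.card : ℝ) * z^2 - 2*z*(∑ i ∈ s, μ i) + ∑ i ∈ s, (μ i)^2 := by
    intro s z
    have : ∀ i ∈ s, (z - μ i)^2 = z^2 - 2*z*μ i + (μ i)^2 := fun i _ => by ring
    rw [Finset.sum_congr rfl this, Finset.sum_add_distrib, Finset.sum_sub_distrib,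
      Finset.sum_const, ← Finset.mul_sum, nsmul_eq_mul]
  -- expansion of h
  have hexp : ∀ a b z, h a b z
      = (∑ i ∈ Finset.Icc a b, σ i) * l z
        + ρ/2 * ∑ i ∈ Finset.Icc a b, (z - μ i)^2 := by
    intro a b z
    rw [hdef]
    simp only [hθ]
    rw [Finset.sum_add_distrib, ← Finset.sum_mul, ← Finset.mul_sum]
  -- the two strict minimality inequalities, expanded
  have ineq1 := hvmn vnp (ne_of_lt horder)
  have ineq2 := hvnp vmn (ne_of_gt horder)
  rw [hexp, hexp, hQ, hQ, hcard1] at ineq1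
  rw [hexp, hexp, hQ, hQ, hcard2] at ineq2
  -- bounds on mean values
  have hnmem : n ∈ Set.Icc m p := ⟨hmn, hnp.le⟩
  have hn1mem : (n+1) ∈ Set.Icc m p := ⟨by omega, by omega⟩
  have hμn : μ n ≤ μ (n+1) := hμmono hnmem hn1mem (by omega)
  have hMb1 : M1 ≤ ((n:ℝ) - m + 1) * μ n := by
    have := Finset.sum_le_sum (s := Finset.Icc m n) (f := μ) (g := fun _ => μ n)
      (fun i hi => by
        rw [Finset.mem_Icc] at hi
        exact hμmono ⟨hi.1, le_trans hi.2 hnp.le⟩ hnmem hi.2)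
    rw [Finset.sum_const, nsmul_eq_mul] at this
    calc M1 ≤ ((Finset.Icc m n).card : ℝ) * μ n := this
      _ = ((n:ℝ) - m + 1) * μ n := by rw [hcard1]
  have hMb2 : ((p:ℝ) - n) * μ (n+1) ≤ M2 := by
    have := Finset.sum_le_sum (s := Finset.Icc (n+1) p) (f := fun _ => μ (n+1)) (g := μ)
      (fun i hi => by
        rw [Finset.mem_Icc] at hi
        exact hμmono hn1mem ⟨by omega, hi.2⟩ hi.1)
    rw [Finset.sum_const, nsmul_eq_mul] at this
    calc ((p:ℝ) - n) * μ (n+1) = ((Finset.Icc (n+1) p).card : ℝ) * μ (n+1) := by rw [hcard2]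
      _ ≤ M2 := this
  have hMM : ((p:ℝ) - n) * M1 ≤ ((n:ℝ) - m + 1) * M2 := by
    have h1 : ((p:ℝ) - n) * M1 ≤ ((p:ℝ) - n) * (((n:ℝ) - m + 1) * μ n) :=
      mul_le_mul_of_nonneg_left hMb1 hc2pos.le
    have h2 : ((n:ℝ) - m + 1) * (((p:ℝ) - n) * μ (n+1)) ≤ ((n:ℝ) - m + 1) * M2 :=
      mul_le_mul_of_nonneg_left hMb2 hc1pos.le
    have h3 : ((p:ℝ) - n) * (((n:ℝ) - m + 1) * μ n)
        ≤ ((n:ℝ) - m + 1) * (((p:ℝ) - n) * μ (n+1)) := by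
      have := mul_le_mul_of_nonneg_left hμn (mul_pos hc1pos hc2pos).le
      linarith [this]
    linarith
  have hlv : l vnp ≤ l vmn := hlmono horder.le
  have hD : (0:ℝ) < vmn - vnp := sub_pos.mpr horder
  -- key product term
  have key : (0:ℝ) ≤ ρ * (vmn - vnp) * (((n:ℝ) - m + 1) * M2 - ((p:ℝ) - n) * M1) :=
    mul_nonneg (mul_pos hρ hD).le (sub_nonneg.mpr hMM)
  rw [div_lt_div_iff₀ hc1pos hc2pos]
  by_contra hcon
  push_neg at hcon
  have hΔ : (0:ℝ) ≤ (((p:ℝ) - n) * S1 - ((n:ℝ) - m + 1) * S2) * (l vmn - l vnp) := by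
    apply mul_nonneg _ (sub_nonneg.mpr hlv)
    linarith [hcon]
  have ineq1' := mul_lt_mul_of_pos_left ineq1 hc2pos
  have ineq2' := mul_lt_mul_of_pos_left ineq2 hc1pos
  linarith [ineq1', ineq2', key, hΔ]
end

section
/- Let g : ℝ^d → ℝ ∪ {+∞} be proper, lower semicontinuous, and c-weakly convex, and let γ > 0 satisfy 0 < cγ < 1/2. Then for all x, y ∈ ℝ^d, (1 − 2cγ)·‖prox_{g,γ}(x) − prox_{g,γ}(y)‖² ≤ ‖x − y‖². -/
open scoped InnerProductSpace

private lemma norm_combo_aux {E : Type*} [NormedAddCommGroup E] [InnerProductSpace ℝ E]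
    (a b z : E) (t : ℝ) :
    ‖((1-t) • a + t • b) - z‖^2
      = (1-t)*‖a-z‖^2 + t*‖b-z‖^2 - t*(1-t)*‖a-b‖^2 := by
  simp only [← real_inner_self_eq_norm_sq, inner_sub_left, inner_sub_right,
    inner_add_left, inner_add_right, real_inner_smul_left, real_inner_smul_right]
  simp only [real_inner_comm a b, real_inner_comm a z, real_inner_comm b z]
  ring

private lemma inner_ident_aux {E : Type*} [NormedAddCommGroup E] [InnerProductSpace ℝ E]
    (px py x y : E) :
    ‖py-x‖^2 + ‖px-y‖^2 - ‖px-x‖^2 - ‖py-y‖^2 = 2 * ⟪px - py, x - y⟫_ℝ := by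
  simp only [← real_inner_self_eq_norm_sq, inner_sub_left, inner_sub_right]
  simp only [real_inner_comm px x, real_inner_comm py x, real_inner_comm px y,
    real_inner_comm py y]
  ring

private lemma young_aux {E : Type*} [NormedAddCommGroup E] [InnerProductSpace ℝ E]
    (p q : E) : 2 * ⟪p, q⟫_ℝ ≤ ‖p‖^2 + ‖q‖^2 := by
  have h := sq_nonneg ‖p - q‖
  rw [norm_sub_sq_real] at h
  linarith

private lemma mul_clear_aux {γ a b A B : ℝ} (hγ : 0 < γ)
    (h : a + 1/(2*γ)*A ≤ b + 1/(2*γ)*B) :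
    2*γ*a + A ≤ 2*γ*b + B := by
  have h2 : (0:ℝ) < 2*γ := by linarith
  have h3 := mul_le_mul_of_nonneg_left h h2.le
  have hA : 2*γ*(1/(2*γ)*A) = A := by field_simp
  have hB : 2*γ*(1/(2*γ)*B) = B := by field_simp
  ring_nf at h3 hA hB ⊢
  linarith

set_option maxHeartbeats 1000000 in
/-- **Key estimate in Lemma 4.**
Let `g : ℝ^d → ℝ` be proper, lower semicontinuous and `c`-weakly convex, and let
`γ > 0` satisfy `0 < cγ < 1/2`.  If `px = prox_{g,γ}(x)` and `py = prox_{g,γ}(y)`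
(i.e. they minimize the corresponding proximal objectives), then
`(1 - 2cγ) ‖px - py‖² ≤ ‖x - y‖²`. -/
theorem prox_contraction_weakly_convex (d : ℕ)
    (g : EuclideanSpace ℝ (Fin d) → ℝ)
    (hg_lsc : LowerSemicontinuous g)
    (c : ℝ) (hc : 0 < c)
    (hg_wc : ConvexOn ℝ Set.univ (fun w => g w + c / 2 * ‖w‖ ^ 2))
    (γ : ℝ) (hγ : 0 < γ) (hcγ : c * γ < 1 / 2)
    (x y px py : EuclideanSpace ℝ (Fin d))
    (hpx : ∀ u, g px + 1 / (2 * γ) * ‖px - x‖ ^ 2 ≤ g u + 1 / (2 * γ) * ‖u - x‖ ^ 2)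
    (hpy : ∀ u, g py + 1 / (2 * γ) * ‖py - y‖ ^ 2 ≤ g u + 1 / (2 * γ) * ‖u - y‖ ^ 2) :
    (1 - 2 * c * γ) * ‖px - py‖ ^ 2 ≤ ‖x - y‖ ^ 2 := by
  set I : ℝ := ⟪px - py, x - y⟫_ℝ with hI_def
  have hP : (0:ℝ) ≤ ‖px - py‖^2 := sq_nonneg _
  have hid := inner_ident_aux px py x y
  -- Key pointwise estimate for every `t ∈ (0,1]`.
  have key : ∀ t : ℝ, 0 < t → t ≤ 1 →
      (1 - c*γ)*(1-t)*‖px - py‖^2 ≤ I := by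
    intro t ht ht1
    set u : EuclideanSpace ℝ (Fin d) := (1-t) • px + t • py with hu
    set v : EuclideanSpace ℝ (Fin d) := (1-t) • py + t • px with hv
    have hconvu := hg_wc.2 (Set.mem_univ px) (Set.mem_univ py)
      (by linarith : (0:ℝ) ≤ 1 - t) ht.le (by ring)
    have hconvv := hg_wc.2 (Set.mem_univ py) (Set.mem_univ px)
      (by linarith : (0:ℝ) ≤ 1 - t) ht.le (by ring)
    simp only [smul_eq_mul, ← hu] at hconvu
    simp only [smul_eq_mul, ← hv] at hconvv
    have hu0 : ‖u‖^2 = (1-t)*‖px‖^2 + t*‖py‖^2 - t*(1-t)*‖px-py‖^2 := by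
      have h := norm_combo_aux px py 0 t
      simpa [← hu] using h
    have hv0 : ‖v‖^2 = (1-t)*‖py‖^2 + t*‖px‖^2 - t*(1-t)*‖px-py‖^2 := by
      have h := norm_combo_aux py px 0 t
      rw [norm_sub_rev py px] at h
      simpa [← hv] using h
    rw [hu0] at hconvu
    rw [hv0] at hconvv
    have hconvu' : g u ≤ (1-t)*g px + t*g py + c/2*(t*(1-t)*‖px-py‖^2) := by
      nlinarith [hconvu]
    have hconvv' : g v ≤ (1-t)*g py + t*g px + c/2*(t*(1-t)*‖px-py‖^2) := by
      nlinarith [hconvv]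
    have hx' := hpx u
    have hy' := hpy v
    rw [show u - x = ((1-t) • px + t • py) - x from by rw [hu]] at hx'
    rw [norm_combo_aux px py x t] at hx'
    rw [show v - y = ((1-t) • py + t • px) - y from by rw [hv]] at hy'
    rw [norm_combo_aux py px y t, norm_sub_rev py px] at hy'
    have hx2 := mul_clear_aux hγ hx'
    have hy2 := mul_clear_aux hγ hy'
    have hconv2u := mul_le_mul_of_nonneg_left hconvu' (by positivity : (0:ℝ) ≤ 2*γ)
    have hconv2v := mul_le_mul_of_nonneg_left hconvv' (by positivity : (0:ℝ) ≤ 2*γ)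
    have hid2 : t*(‖py-x‖^2 + ‖px-y‖^2 - ‖px-x‖^2 - ‖py-y‖^2) = t*(2*I) := by
      rw [hid]
    have hsum : 0 ≤ t*(2*I - 2*(1-c*γ)*(1-t)*‖px - py‖^2) := by
      ring_nf at hx2 hy2 hconv2u hconv2v hid2 ⊢
      linarith [hx2, hy2, hconv2u, hconv2v, hid2]
    have hX : (0:ℝ) ≤ 2*I - 2*(1-c*γ)*(1-t)*‖px - py‖^2 := by
      by_contra hneg
      push_neg at hneg
      nlinarith [hsum, mul_pos ht (by linarith : (0:ℝ) < -(2*I - 2*(1-c*γ)*(1-t)*‖px - py‖^2))]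
    linarith
  -- Pass to the limit `t → 0`.
  have hI0 : 0 ≤ I := by
    have h := key 1 one_pos le_rfl
    simpa using h
  have hfin : (1 - c*γ)*‖px - py‖^2 ≤ I := by
    rcases eq_or_lt_of_le hP with hP0 | hP0
    · rw [← hP0]; simpa using hI0
    · by_contra hlt
      push_neg at hlt
      have h1cγ : (0:ℝ) < 1 - c*γ := by linarith
      set δ : ℝ := (1-c*γ)*‖px - py‖^2 - I with hδ_def
      have hδ : 0 < δ := by simp only [hδ_def]; linarith
      have hδle : δ ≤ (1-c*γ)*‖px - py‖^2 := by
        simp only [hδ_def]; linarith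
      set t : ℝ := δ/(2*(1-c*γ)*‖px - py‖^2) with ht_def
      have hden : (0:ℝ) < 2*(1-c*γ)*‖px - py‖^2 := by positivity
      have ht : 0 < t := div_pos hδ hden
      have ht1 : t ≤ 1 := by
        rw [ht_def, div_le_one hden]; linarith
      have hkey := key t ht ht1
      have ht' : (1-c*γ)*t*‖px - py‖^2 = δ/2 := by
        have hn : ‖px - py‖ ≠ 0 := by intro h; rw [h] at hP0; norm_num at hP0
        rw [ht_def]; field_simp
      nlinarith [hkey, ht']
  have hyoung := young_aux (px - py) (x - y)
  have : 2*(1 - c*γ)*‖px - py‖^2 ≤ ‖px - py‖^2 + ‖x - y‖^2 := by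
    linarith
  linarith
end

section
/- Let g : ℝ^d → ℝ ∪ {+∞} be proper, lower semicontinuous, and c-weakly convex, and let γ > 0 satisfy 0 < cγ ≤ 1/3. Then the displacement map of the proximal operator is hypomonotone in the following sense: for all x, y ∈ ℝ^d, ⟨(x − prox_{g,γ}(x)) − (y − prox_{g,γ}(y)), x − y⟩ ≥ −‖x − y‖². -/
open scoped RealInnerProductSpace

private lemma aux_nonneg_of_forall (A B : ℝ) (h : ∀ t ∈ Set.Ioo (0:ℝ) 1, 0 ≤ A + t * B) :
    0 ≤ A := by
  by_contra hA
  push_neg at hA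
  rcases le_or_gt B 0 with hB | hB
  · have h2 := h (1/2) ⟨by norm_num, by norm_num⟩
    nlinarith
  · set t : ℝ := min (1/2) (-A / (2*B)) with ht
    have ht0 : 0 < t := lt_min (by norm_num) (div_pos (by linarith) (by linarith))
    have ht1 : t < 1 := lt_of_le_of_lt (min_le_left _ _) (by norm_num)
    have hkey := h t ⟨ht0, ht1⟩
    have htle : t ≤ -A / (2*B) := min_le_right _ _
    have : t * B ≤ -A / 2 := by
      have h3 := mul_le_mul_of_nonneg_right htle (le_of_lt hB)
      calc t * B ≤ (-A / (2*B)) * B := h3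
        _ = -A / 2 := by field_simp
    linarith

private lemma norm_add_smul_sq {E : Type*} [NormedAddCommGroup E] [InnerProductSpace ℝ E]
    (a w : E) (t : ℝ) :
    ‖a + t • w‖ ^ 2 = ‖a‖ ^ 2 + 2 * t * ⟪a, w⟫ + t ^ 2 * ‖w‖ ^ 2 := by
  rw [norm_add_sq_real, real_inner_smul_right, norm_smul, mul_pow]
  simp [sq_abs]
  ring

private lemma aux_final (s D W e : ℝ) (hW : 0 ≤ W) (hD : 0 ≤ D)
    (he : e ≤ 1/3) (hs : (1 - e) * W ^ 2 ≤ s) (hcs : s ≤ D * W) :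
    -D ^ 2 ≤ D ^ 2 - s := by
  have hs23 : (2/3) * W ^ 2 ≤ s := by nlinarith [sq_nonneg W]
  have hs0 : 0 ≤ s := by nlinarith [sq_nonneg W]
  nlinarith [mul_le_mul hcs hcs hs0 (mul_nonneg hD hW), sq_nonneg (W - D), sq_nonneg D,
    mul_nonneg hW hD]

set_option maxHeartbeats 1000000 in
/-- **Hypomonotonicity of the proximal displacement map (core of Lemma 2).**
Let `g : ℝ^d → ℝ` be proper, lower semicontinuous and `c`-weakly convex, and let
`γ > 0` satisfy `0 < cγ ≤ 1/3`.  If `px = prox_{g,γ}(x)` and `py = prox_{g,γ}(y)`,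
then `⟪(x - px) - (y - py), x - y⟫ ≥ -‖x - y‖²`. -/
theorem prox_displacement_hypomonotone (d : ℕ)
    (g : EuclideanSpace ℝ (Fin d) → ℝ)
    (hg_lsc : LowerSemicontinuous g)
    (c : ℝ) (hc : 0 < c)
    (hg_wc : ConvexOn ℝ Set.univ (fun w => g w + c / 2 * ‖w‖ ^ 2))
    (γ : ℝ) (hγ : 0 < γ) (hcγ : c * γ ≤ 1 / 3)
    (x y px py : EuclideanSpace ℝ (Fin d))
    (hpx : ∀ u, g px + 1 / (2 * γ) * ‖px - x‖ ^ 2 ≤ g u + 1 / (2 * γ) * ‖u - x‖ ^ 2)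
    (hpy : ∀ u, g py + 1 / (2 * γ) * ‖py - y‖ ^ 2 ≤ g u + 1 / (2 * γ) * ‖u - y‖ ^ 2) :
    ⟪(x - px) - (y - py), x - y⟫ ≥ -‖x - y‖ ^ 2 := by
  set w : EuclideanSpace ℝ (Fin d) := py - px with hw
  set a : EuclideanSpace ℝ (Fin d) := px - x with ha
  set b : EuclideanSpace ℝ (Fin d) := py - y with hb
  have hγne : γ ≠ 0 := ne_of_gt hγ
  have hpyw : py = px + (1:ℝ) • w := by rw [hw]; module
  have e5 : ‖py‖ ^ 2 = ‖px‖ ^ 2 + 2 * ⟪px, w⟫ + ‖w‖ ^ 2 := by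
    calc ‖py‖ ^ 2 = ‖px + (1:ℝ) • w‖ ^ 2 := by rw [← hpyw]
      _ = ‖px‖ ^ 2 + 2 * 1 * ⟪px, w⟫ + 1 ^ 2 * ‖w‖ ^ 2 := norm_add_smul_sq px w 1
      _ = ‖px‖ ^ 2 + 2 * ⟪px, w⟫ + ‖w‖ ^ 2 := by ring
  have e7 : ⟪py, w⟫ = ⟪px, w⟫ + ‖w‖ ^ 2 := by
    calc ⟪py, w⟫ = ⟪px + (1:ℝ) • w, w⟫ := by rw [← hpyw]
      _ = ⟪px, w⟫ + ‖w‖ ^ 2 := by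
          rw [one_smul, inner_add_left, real_inner_self_eq_norm_sq]
  -- The key hypomonotonicity-type bound
  have key : 0 ≤ c * ‖w‖ ^ 2 + (1 / γ) * (⟪a, w⟫ - ⟪b, w⟫) := by
    apply aux_nonneg_of_forall _ ((1 / γ - c) * ‖w‖ ^ 2)
    intro t ht
    have h1 := hpx (px + t • w)
    have h2 := hpy (py + (-t) • w)
    rw [show px + t • w - x = a + t • w by rw [ha]; module] at h1
    rw [show py + (-t) • w - y = b + (-t) • w by rw [hb]; module] at h2
    have h3 := hg_wc.2 (Set.mem_univ px) (Set.mem_univ py)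
      (by linarith [ht.2] : (0:ℝ) ≤ 1 - t) (le_of_lt ht.1) (by ring)
    have h4 := hg_wc.2 (Set.mem_univ px) (Set.mem_univ py)
      (le_of_lt ht.1) (by linarith [ht.2] : (0:ℝ) ≤ 1 - t) (by ring)
    simp only [smul_eq_mul] at h3 h4
    rw [show (1 - t) • px + t • py = px + t • w by rw [hw]; module] at h3
    rw [show t • px + (1 - t) • py = py + (-t) • w by rw [hw]; module] at h4
    rw [norm_add_smul_sq a w t] at h1
    rw [norm_add_smul_sq b w (-t)] at h2
    rw [norm_add_smul_sq px w t, e5] at h3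
    rw [norm_add_smul_sq py w (-t), e7, e5] at h4
    have P : 0 ≤ c * t * (1 - t) * ‖w‖ ^ 2
        + 1 / (2 * γ) * (2 * t * ⟪a, w⟫ - 2 * t * ⟪b, w⟫ + 2 * t ^ 2 * ‖w‖ ^ 2) := by
      linarith [h1, h2, h3, h4]
    have hEq : t * ((c * ‖w‖ ^ 2 + (1 / γ) * (⟪a, w⟫ - ⟪b, w⟫)) + t * ((1 / γ - c) * ‖w‖ ^ 2))
        = c * t * (1 - t) * ‖w‖ ^ 2
        + 1 / (2 * γ) * (2 * t * ⟪a, w⟫ - 2 * t * ⟪b, w⟫ + 2 * t ^ 2 * ‖w‖ ^ 2) := by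
      field_simp
      ring
    have hP2 : t * 0 ≤ t * ((c * ‖w‖ ^ 2 + (1 / γ) * (⟪a, w⟫ - ⟪b, w⟫))
        + t * ((1 / γ - c) * ‖w‖ ^ 2)) := by rw [hEq, mul_zero]; exact P
    have := (mul_le_mul_iff_right₀ ht.1).mp hP2
    linarith
  -- rewrite goal
  have hgoal : ⟪(x - px) - (y - py), x - y⟫ = ‖x - y‖ ^ 2 - ⟪y - x, w⟫ := by
    rw [show (x - px) - (y - py) = (x - y) + w by rw [hw]; module]
    rw [inner_add_left, real_inner_self_eq_norm_sq]
    have : ⟪w, x - y⟫ = - ⟪y - x, w⟫ := by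
      rw [real_inner_comm, show x - y = -(y - x) by module, inner_neg_left]
    rw [this]; ring
  rw [hgoal, ge_iff_le]
  have hab : ⟪b, w⟫ - ⟪a, w⟫ = ‖w‖ ^ 2 - ⟪y - x, w⟫ := by
    have hba : b - a = w - (y - x) := by rw [ha, hb, hw]; module
    have h' : ⟪b - a, w⟫ = ⟪w, w⟫ - ⟪y - x, w⟫ := by rw [hba, inner_sub_left]
    rw [inner_sub_left] at h'
    rw [h', real_inner_self_eq_norm_sq]
  have key2 : 0 ≤ γ * c * ‖w‖ ^ 2 + (⟪a, w⟫ - ⟪b, w⟫) := by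
    have hmul := mul_le_mul_of_nonneg_left key (le_of_lt hγ)
    have : γ * (c * ‖w‖ ^ 2 + (1 / γ) * (⟪a, w⟫ - ⟪b, w⟫))
        = γ * c * ‖w‖ ^ 2 + (⟪a, w⟫ - ⟪b, w⟫) := by field_simp
    linarith [hmul, this.ge, this.le]
  have hs : (1 - c * γ) * ‖w‖ ^ 2 ≤ ⟪y - x, w⟫ := by nlinarith [hab, key2]
  have hcs : ⟪y - x, w⟫ ≤ ‖x - y‖ * ‖w‖ := by
    have := real_inner_le_norm (y - x) w
    rwa [norm_sub_rev y x] at this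
  exact aux_final _ _ _ (c * γ) (norm_nonneg _) (norm_nonneg _) hcγ hs hcs
end

section
/- Let g : ℝ^d → ℝ ∪ {+∞} be proper, lower semicontinuous, and c-weakly convex, and let γ > 0 satisfy 0 < cγ ≤ 1/3. Then the Moreau envelope M_{g,γ} is γ^{-1}-weakly convex; that is, the function w ↦ M_{g,γ}(w) + (1/(2γ))‖w‖² is convex on ℝ^d. -/
open Metric Set

section aux
set_option linter.unusedSectionVars false
variable {E : Type*} [NormedAddCommGroup E] [InnerProductSpace ℝ E]

lemma combo_norm_sq (a b : E) (t s : ℝ) (hts : t + s = 1) :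
    ‖t • a + s • b‖ ^ 2 = t * ‖a‖ ^ 2 + s * ‖b‖ ^ 2 - t * s * ‖a - b‖ ^ 2 := by
  have h1 : ‖t • a + s • b‖ ^ 2
      = t ^ 2 * ‖a‖ ^ 2 + 2 * (t * (s * inner ℝ a b)) + s ^ 2 * ‖b‖ ^ 2 := by
    rw [norm_add_sq_real, norm_smul, norm_smul, real_inner_smul_left, real_inner_smul_right,
      mul_pow, mul_pow, Real.norm_eq_abs, Real.norm_eq_abs, sq_abs, sq_abs]
  have h2 : ‖a - b‖ ^ 2 = ‖a‖ ^ 2 - 2 * inner ℝ a b + ‖b‖ ^ 2 := norm_sub_sq_real a b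
  have hs : s = 1 - t := by linarith
  subst hs
  rw [h1, h2]; ring

lemma Q_nonneg (c γ : ℝ) (hc : 0 ≤ c) (hγ : 0 < γ) (hcγ : c * γ ≤ 1 / 2) (x w : E) :
    0 ≤ 1 / (2 * γ) * ‖x - w‖ ^ 2 + 1 / (2 * γ) * ‖w‖ ^ 2 - c / 2 * ‖x‖ ^ 2 := by
  have hx : ‖x‖ ≤ ‖x - w‖ + ‖w‖ := by
    calc ‖x‖ = ‖(x - w) + w‖ := by rw [sub_add_cancel]
    _ ≤ _ := norm_add_le _ _
  have h1 : ‖x‖ ^ 2 ≤ 2 * ‖x - w‖ ^ 2 + 2 * ‖w‖ ^ 2 := by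
    nlinarith [norm_nonneg x, norm_nonneg (x - w), norm_nonneg w, sq_nonneg (‖x - w‖ - ‖w‖)]
  have hc' : c ≤ 1 / (2 * γ) := by
    rw [le_div_iff₀ (by linarith)]; linarith
  nlinarith [sq_nonneg ‖x - w‖, sq_nonneg ‖w‖, sq_nonneg ‖x‖]

end aux

set_option maxHeartbeats 1000000 in
/-- **Lemma 2.**
Let `g : ℝ^d → ℝ` be proper, lower semicontinuous and `c`-weakly convex, and let
`γ > 0` satisfy `0 < cγ ≤ 1/3`.  Then the Moreau envelope
`M_{g,γ}(w) = ⨅_x (g x + (1/(2γ))‖x - w‖²)` is `γ⁻¹`-weakly convex, i.e.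
`w ↦ M_{g,γ}(w) + (1/(2γ))‖w‖²` is convex. -/
theorem moreau_envelope_weakly_convex (d : ℕ)
    (g : EuclideanSpace ℝ (Fin d) → ℝ)
    (hg_lsc : LowerSemicontinuous g)
    (c : ℝ) (hc : 0 < c)
    (hg_wc : ConvexOn ℝ Set.univ (fun w => g w + c / 2 * ‖w‖ ^ 2))
    (γ : ℝ) (hγ : 0 < γ) (hcγ : c * γ ≤ 1 / 3)
    (M : EuclideanSpace ℝ (Fin d) → ℝ)
    (hM : ∀ w, M w = ⨅ x : EuclideanSpace ℝ (Fin d),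
      (g x + 1 / (2 * γ) * ‖x - w‖ ^ 2)) :
    ConvexOn ℝ Set.univ (fun w => M w + 1 / (2 * γ) * ‖w‖ ^ 2) := by
  have hcont : Continuous (fun w : EuclideanSpace ℝ (Fin d) => g w + c / 2 * ‖w‖ ^ 2) :=
    hg_wc.locallyLipschitz.continuous
  obtain ⟨z, hz, hzmin⟩ := (isCompact_closedBall (0 : EuclideanSpace ℝ (Fin d)) 1).exists_isMinOn
    ⟨0, mem_closedBall_self zero_le_one⟩ hcont.continuousOn
  set h : EuclideanSpace ℝ (Fin d) → ℝ := fun w => g w + c / 2 * ‖w‖ ^ 2 with hh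
  set K : ℝ := |h z| + |h 0| + 1 with hK
  have hK0 : 0 < K := by positivity
  clear_value h K
  -- linear lower bound on h
  have hlow : ∀ x : EuclideanSpace ℝ (Fin d), -(K * (‖x‖ + 1)) ≤ h x := by
    intro x
    by_cases hx1 : ‖x‖ ≤ 1
    · have hxb : x ∈ closedBall (0 : EuclideanSpace ℝ (Fin d)) 1 := by
        simpa [mem_closedBall_zero_iff] using hx1
      have hzx : h z ≤ h x := hzmin hxb
      have h1 : -|h z| ≤ h z := neg_abs_le _
      rw [hK]
      nlinarith [abs_nonneg (h 0), norm_nonneg x, hzx, h1,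
        mul_nonneg (norm_nonneg x) (abs_nonneg (h z)),
        mul_nonneg (norm_nonneg x) (abs_nonneg (h 0))]
    · push_neg at hx1
      have hx0 : (0:ℝ) < ‖x‖ := by linarith
      have hun : ‖(‖x‖⁻¹ • x : EuclideanSpace ℝ (Fin d))‖ = 1 := by
        rw [norm_smul, Real.norm_eq_abs, abs_of_pos (inv_pos.mpr hx0), inv_mul_cancel₀ hx0.ne']
      have hub : (‖x‖⁻¹ • x : EuclideanSpace ℝ (Fin d)) ∈ closedBall (0 : EuclideanSpace ℝ (Fin d)) 1 := by
        simp [mem_closedBall_zero_iff, hun]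
      have hzu : h z ≤ h (‖x‖⁻¹ • x) := hzmin hub
      have htin : (0:ℝ) ≤ ‖x‖⁻¹ := (inv_pos.mpr hx0).le
      have hinv : ‖x‖ * ‖x‖⁻¹ = 1 := mul_inv_cancel₀ hx0.ne'
      have hle1 : ‖x‖⁻¹ ≤ 1 := by nlinarith [hinv, hx1, htin]
      have hcvx0 := hg_wc.2 (mem_univ x) (mem_univ (0 : EuclideanSpace ℝ (Fin d))) htin
        (by linarith : 0 ≤ 1 - ‖x‖⁻¹) (by ring)
      have hcvx : h (‖x‖⁻¹ • x) ≤ ‖x‖⁻¹ * h x + (1 - ‖x‖⁻¹) * h 0 := by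
        simpa [smul_eq_mul, smul_zero, add_zero] using hcvx0
      have hmul := mul_le_mul_of_nonneg_left hcvx hx0.le
      have hmul2 : ‖x‖ * h (‖x‖⁻¹ • x) ≤ h x + (‖x‖ - 1) * h 0 := by
        have hr : ‖x‖ * (‖x‖⁻¹ * h x + (1 - ‖x‖⁻¹) * h 0)
            = (‖x‖ * ‖x‖⁻¹) * h x + (‖x‖ - ‖x‖ * ‖x‖⁻¹) * h 0 := by ring
        rw [hr, hinv] at hmul
        linarith [hmul]
      have h1 : -|h z| ≤ h z := neg_abs_le _
      have h3 : h 0 ≤ |h 0| := le_abs_self _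
      rw [hK]
      nlinarith [hmul2, mul_le_mul_of_nonneg_left hzu (norm_nonneg x),
        mul_le_mul_of_nonneg_left h1 (norm_nonneg x),
        mul_le_mul_of_nonneg_left h3 (by linarith : (0:ℝ) ≤ ‖x‖ - 1),
        mul_nonneg (norm_nonneg x) (abs_nonneg (h 0)),
        mul_nonneg (norm_nonneg x) (abs_nonneg (h z)),
        norm_nonneg x, abs_nonneg (h z), abs_nonneg (h 0)]
  obtain ⟨D, hD⟩ : ∃ D : ℝ, K = c * D := ⟨K / c, (mul_div_cancel₀ _ hc.ne').symm⟩
  have hD0 : 0 ≤ D := by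
    by_contra hneg
    push_neg at hneg
    nlinarith
  -- boundedness below of the inner objective
  have hbdd : ∀ w : EuclideanSpace ℝ (Fin d),
      BddBelow (Set.range fun x : EuclideanSpace ℝ (Fin d) =>
        g x + 1 / (2 * γ) * ‖x - w‖ ^ 2) := by
    intro w
    refine ⟨-(4 * c * D * D) - K - 1 / (2 * γ) * ‖w‖ ^ 2, ?_⟩
    rintro _ ⟨x, rfl⟩
    show -(4 * c * D * D) - K - 1 / (2 * γ) * ‖w‖ ^ 2 ≤ g x + 1 / (2 * γ) * ‖x - w‖ ^ 2
    have hQ := Q_nonneg (3 * c / 2) γ (by linarith) hγ (by nlinarith) x w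
    have hl : -(K * (‖x‖ + 1)) ≤ g x + c / 2 * ‖x‖ ^ 2 := by
      have := hlow x
      rwa [hh] at this
    have hbnd : K * ‖x‖ ≤ c / 4 * ‖x‖ ^ 2 + 4 * c * D * D := by
      rw [hD]
      nlinarith [mul_nonneg hc.le (sq_nonneg (‖x‖ - 2 * D)), mul_nonneg hc.le (sq_nonneg D)]
    linarith
  -- main convexity argument
  refine ⟨convex_univ, ?_⟩
  intro w1 _ w2 _ t s ht hs hts
  obtain rfl | ht' := ht.eq_or_lt
  · have hs1 : s = 1 := by linarith
    subst hs1; simp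
  obtain rfl | hs' := hs.eq_or_lt
  · have ht1 : t = 1 := by linarith
    subst ht1; simp
  set wb : EuclideanSpace ℝ (Fin d) := t • w1 + s • w2 with hwb
  have key : ∀ x1 x2 : EuclideanSpace ℝ (Fin d),
      M wb + 1 / (2 * γ) * ‖wb‖ ^ 2 ≤
        t * (g x1 + 1 / (2 * γ) * ‖x1 - w1‖ ^ 2 + 1 / (2 * γ) * ‖w1‖ ^ 2) +
        s * (g x2 + 1 / (2 * γ) * ‖x2 - w2‖ ^ 2 + 1 / (2 * γ) * ‖w2‖ ^ 2) := by
    intro x1 x2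
    set xb : EuclideanSpace ℝ (Fin d) := t • x1 + s • x2 with hxb
    have h1 : M wb ≤ g xb + 1 / (2 * γ) * ‖xb - wb‖ ^ 2 := by
      rw [hM wb]; exact ciInf_le (hbdd wb) xb
    have hconv0 := hg_wc.2 (mem_univ x1) (mem_univ x2) ht'.le hs'.le hts
    have hconv : g xb + c / 2 * ‖xb‖ ^ 2 ≤
        t * (g x1 + c / 2 * ‖x1‖ ^ 2) + s * (g x2 + c / 2 * ‖x2‖ ^ 2) := by
      simp only [hh, smul_eq_mul] at hconv0
      exact hconv0
    have e1 : ‖xb - wb‖ ^ 2 = t * ‖x1 - w1‖ ^ 2 + s * ‖x2 - w2‖ ^ 2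
        - t * s * ‖(x1 - x2) - (w1 - w2)‖ ^ 2 := by
      have hd : xb - wb = t • (x1 - w1) + s • (x2 - w2) := by
        rw [hxb, hwb]; module
      have hd2 : (x1 - w1) - (x2 - w2) = (x1 - x2) - (w1 - w2) := by module
      rw [hd, combo_norm_sq _ _ _ _ hts, hd2]
    have e2 : ‖wb‖ ^ 2 = t * ‖w1‖ ^ 2 + s * ‖w2‖ ^ 2 - t * s * ‖w1 - w2‖ ^ 2 :=
      combo_norm_sq _ _ _ _ hts
    have e3 : ‖xb‖ ^ 2 = t * ‖x1‖ ^ 2 + s * ‖x2‖ ^ 2 - t * s * ‖x1 - x2‖ ^ 2 :=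
      combo_norm_sq _ _ _ _ hts
    have hQ := Q_nonneg c γ hc.le hγ (by linarith) (x1 - x2) (w1 - w2)
    have hts0 : (0:ℝ) ≤ t * s := mul_nonneg ht'.le hs'.le
    have hQ' := mul_le_mul_of_nonneg_left hQ hts0
    rw [e1] at h1
    rw [e3] at hconv
    rw [mul_zero] at hQ'
    calc M wb + 1 / (2 * γ) * ‖wb‖ ^ 2
        = M wb + 1 / (2 * γ) * (t * ‖w1‖ ^ 2 + s * ‖w2‖ ^ 2 - t * s * ‖w1 - w2‖ ^ 2) := by
          rw [e2]
      _ ≤ _ := by linarith [h1, hconv, hQ']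
  have step1 : ∀ x2 : EuclideanSpace ℝ (Fin d),
      M wb + 1 / (2 * γ) * ‖wb‖ ^ 2 ≤
        t * (M w1 + 1 / (2 * γ) * ‖w1‖ ^ 2) +
        s * (g x2 + 1 / (2 * γ) * ‖x2 - w2‖ ^ 2 + 1 / (2 * γ) * ‖w2‖ ^ 2) := by
    intro x2
    have hle : (M wb + 1 / (2 * γ) * ‖wb‖ ^ 2
          - s * (g x2 + 1 / (2 * γ) * ‖x2 - w2‖ ^ 2 + 1 / (2 * γ) * ‖w2‖ ^ 2)
          - t * (1 / (2 * γ) * ‖w1‖ ^ 2)) / t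
        ≤ ⨅ x : EuclideanSpace ℝ (Fin d), (g x + 1 / (2 * γ) * ‖x - w1‖ ^ 2) := by
      refine le_ciInf fun x1 => ?_
      rw [div_le_iff₀ ht']
      linarith [key x1 x2]
    rw [← hM w1, div_le_iff₀ ht'] at hle
    linarith [hle]
  have hfin : (M wb + 1 / (2 * γ) * ‖wb‖ ^ 2
        - t * (M w1 + 1 / (2 * γ) * ‖w1‖ ^ 2)
        - s * (1 / (2 * γ) * ‖w2‖ ^ 2)) / s
      ≤ ⨅ x : EuclideanSpace ℝ (Fin d), (g x + 1 / (2 * γ) * ‖x - w2‖ ^ 2) := by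
    refine le_ciInf fun x2 => ?_
    rw [div_le_iff₀ hs']
    linarith [step1 x2]
  rw [← hM w2, div_le_iff₀ hs'] at hfin
  show M wb + 1 / (2 * γ) * ‖wb‖ ^ 2 ≤
    t • (M w1 + 1 / (2 * γ) * ‖w1‖ ^ 2) + s • (M w2 + 1 / (2 * γ) * ‖w2‖ ^ 2)
  rw [smul_eq_mul, smul_eq_mul]
  linarith [hfin]
end

section
/- Let g : ℝ^d → ℝ ∪ {+∞} be proper, lower semicontinuous, and c-weakly convex, let 0 < γ < 1/c, D ∈ ℝ^{n×d}, ρ > 0, r > 0, and fix z, λ ∈ ℝⁿ and w⁰ ∈ ℝ^d. Suppose w⁺ ∈ ℝ^d minimizes the function w ↦ (ρ/2)‖z − Dw + λ/ρ‖² + M_{g,γ}(w) + (r/2)‖w − w⁰‖² over ℝ^d, and set λ⁺ = λ + ρ(z − Dw⁺) and w̃ = prox_{g,γ}(w⁺). Then D^⊤λ⁺ + r(w⁰ − w⁺) is a c-subgradient of g at w̃; that is, for all u ∈ ℝ^d, g(u) ≥ g(w̃) + ⟨D^⊤λ⁺ + r(w⁰ − w⁺), u − w̃⟩ − (c/2)‖u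 − w̃‖². -/
set_option maxHeartbeats 1000000

open scoped RealInnerProductSpace

private lemma aux_t (A B C : ℝ) (hC : 0 ≤ C)
    (h : ∀ t : ℝ, 0 < t → t ≤ 1 → A ≤ B + t * C) : A ≤ B := by
  refine le_of_forall_pos_le_add fun ε hε => ?_
  rcases eq_or_lt_of_le hC with hC0 | hC0
  · have := h 1 one_pos le_rfl
    nlinarith
  · have ht : 0 < min 1 (ε / C) := lt_min one_pos (div_pos hε hC0)
    have h1 := h _ ht (min_le_left _ _)
    have h2 : min 1 (ε / C) * C ≤ ε := by
      calc min 1 (ε / C) * C ≤ (ε / C) * C :=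
            mul_le_mul_of_nonneg_right (min_le_right _ _) hC
        _ = ε := div_mul_cancel₀ ε (ne_of_gt hC0)
    linarith

private lemma aux_s (α β : ℝ) (h : ∀ s : ℝ, 0 ≤ s * α + s ^ 2 * β) : α = 0 := by
  by_contra hα
  have hβ : 0 ≤ β := by have h1 := h 1; have h2 := h (-1); nlinarith
  have hβ1 : (0:ℝ) < β + 1 := by linarith
  have hs := h (-α / (β + 1))
  have key : (-α / (β + 1) * α + (-α / (β + 1)) ^ 2 * β) * (β + 1) ^ 2
      = -α ^ 2 * (β + 1) + α ^ 2 * β := by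
    field_simp
  have h2 : 0 ≤ -α ^ 2 * (β + 1) + α ^ 2 * β := by
    rw [← key]; exact mul_nonneg hs (sq_nonneg _)
  have hpos : 0 < α ^ 2 := by positivity
  nlinarith

private lemma aux_expand {E : Type*} [NormedAddCommGroup E] [InnerProductSpace ℝ E]
    (x y : E) (s : ℝ) : ‖x + s • y‖ ^ 2 = ‖x‖ ^ 2 + 2 * s * ⟪x, y⟫ + s ^ 2 * ‖y‖ ^ 2 := by
  rw [norm_add_sq_real, real_inner_smul_right, norm_smul, Real.norm_eq_abs, mul_pow, sq_abs]
  ring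

private lemma aux_bdd {E : Type*} [NormedAddCommGroup E] [InnerProductSpace ℝ E]
    (g : E → ℝ) (c a : ℝ) (hc : 0 < c) (ha : c / 2 < a)
    (wt v0 : E)
    (hsub : ∀ x, g wt + ⟪v0, x - wt⟫ - c / 2 * ‖x - wt‖ ^ 2 ≤ g x)
    (w : E) : BddBelow (Set.range fun x => g x + a * ‖x - w‖ ^ 2) := by
  set V : ℝ := ‖v0‖ with hV
  set b : ℝ := ‖w - wt‖ with hb
  set A : ℝ := a - c / 2 with hA
  set X : ℝ := 2 * a * b + V with hX
  have hA0 : 0 < A := by simp [hA]; linarith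
  have hV0 : 0 ≤ V := norm_nonneg _
  have hb0 : 0 ≤ b := norm_nonneg _
  refine ⟨g wt - V * b - c / 2 * b ^ 2 - X ^ 2 / (4 * A), ?_⟩
  rintro y ⟨x, rfl⟩
  simp only
  have h1 := hsub x
  have h2 : -(V * ‖x - wt‖) ≤ ⟪v0, x - wt⟫ :=
    neg_le_of_neg_le (by nlinarith [abs_real_inner_le_norm v0 (x - wt), neg_abs_le (⟪v0, x - wt⟫)])
  set t : ℝ := ‖x - wt‖ with ht
  set s : ℝ := ‖x - w‖ with hs
  have ht0 : 0 ≤ t := norm_nonneg _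
  have hs0 : 0 ≤ s := norm_nonneg _
  have h3 : t ≤ s + b := by
    rw [ht, hs, hb]
    calc ‖x - wt‖ = ‖(x - w) + (w - wt)‖ := by rw [sub_add_sub_cancel]
      _ ≤ ‖x - w‖ + ‖w - wt‖ := norm_add_le _ _
  have hq : 0 ≤ X ^ 2 / (4 * A) := by positivity
  have hglb : g wt - V * t - c / 2 * t ^ 2 ≤ g x := by nlinarith [h1, h2]
  rcases le_or_gt t b with hcase | hcase
  · have e1 : V * t ≤ V * b := mul_le_mul_of_nonneg_left hcase hV0
    have e2 : t ^ 2 ≤ b ^ 2 := pow_le_pow_left₀ ht0 hcase 2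
    nlinarith [mul_nonneg (le_of_lt (lt_of_le_of_lt (by linarith : (0:ℝ) ≤ c/2) ha)) (sq_nonneg s)]
  · have hτ0 : 0 ≤ t - b := by linarith
    have hsτ : t - b ≤ s := by linarith
    have ha0 : 0 < a := lt_of_le_of_lt (by linarith) ha
    have e2 : a * (t - b) ^ 2 ≤ a * s ^ 2 :=
      mul_le_mul_of_nonneg_left (pow_le_pow_left₀ hτ0 hsτ 2) ha0.le
    have hXge : V + c * b ≤ X := by
      simp only [hX]
      nlinarith
    have h4A : (0:ℝ) < 4 * A := by linarith
    have step : 0 ≤ 4 * A * (A * (t - b) ^ 2 - (V + c * b) * (t - b) + X ^ 2 / (4 * A)) := by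
      have hid : 4 * A * (A * (t - b) ^ 2 - (V + c * b) * (t - b) + X ^ 2 / (4 * A))
          = (2 * A * (t - b) - X) ^ 2 + 4 * A * (X - (V + c * b)) * (t - b) := by
        field_simp
        ring
      rw [hid]
      have := mul_nonneg (mul_nonneg h4A.le (sub_nonneg.mpr hXge)) hτ0
      linarith [sq_nonneg (2 * A * (t - b) - X), this]
    have step2 : 0 ≤ A * (t - b) ^ 2 - (V + c * b) * (t - b) + X ^ 2 / (4 * A) := by
      rcases le_or_gt 0 (A * (t - b) ^ 2 - (V + c * b) * (t - b) + X ^ 2 / (4 * A)) with h | h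
      · exact h
      · exfalso; nlinarith [step, mul_pos h4A (neg_pos.mpr h)]
    nlinarith [hglb, e2, step2]

/-- **Second inclusion of Proposition 2 (smoothed ADMM).**
Let `g : ℝ^d → ℝ` be proper, lsc and `c`-weakly convex, `0 < γ < 1/c`, and let
`M = M_{g,γ}` be the Moreau envelope.  If `w⁺` minimizes
`w ↦ (ρ/2)‖z - Dw + λ/ρ‖² + M(w) + (r/2)‖w - w⁰‖²`, `λ⁺ = λ + ρ(z - Dw⁺)` and
`w̃ = prox_{g,γ}(w⁺)`, then `D^⊤λ⁺ + r(w⁰ - w⁺)` is a `c`-subgradient of `g`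
at `w̃`. -/
theorem smoothed_admm_w_update_first_order (d n : ℕ)
    (g : EuclideanSpace ℝ (Fin d) → ℝ)
    (hg_lsc : LowerSemicontinuous g)
    (c : ℝ) (hc : 0 < c)
    (hg_wc : ConvexOn ℝ Set.univ (fun w => g w + c / 2 * ‖w‖ ^ 2))
    (γ : ℝ) (hγ : 0 < γ) (hγc : γ < 1 / c)
    (M : EuclideanSpace ℝ (Fin d) → ℝ)
    (hM : ∀ w, M w = ⨅ x : EuclideanSpace ℝ (Fin d),
      (g x + 1 / (2 * γ) * ‖x - w‖ ^ 2))
    (D : EuclideanSpace ℝ (Fin d) →L[ℝ] EuclideanSpace ℝ (Fin n))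
    (ρ r : ℝ) (hρ : 0 < ρ) (hr : 0 < r)
    (z lam : EuclideanSpace ℝ (Fin n)) (w0 : EuclideanSpace ℝ (Fin d))
    (wp : EuclideanSpace ℝ (Fin d))
    (hwp : ∀ w, ρ / 2 * ‖z - D wp + ρ⁻¹ • lam‖ ^ 2 + M wp + r / 2 * ‖wp - w0‖ ^ 2
      ≤ ρ / 2 * ‖z - D w + ρ⁻¹ • lam‖ ^ 2 + M w + r / 2 * ‖w - w0‖ ^ 2)
    (lamp : EuclideanSpace ℝ (Fin n))
    (hlamp : lamp = lam + ρ • (z - D wp))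
    (wt : EuclideanSpace ℝ (Fin d))
    (hwt : ∀ u, g wt + 1 / (2 * γ) * ‖wt - wp‖ ^ 2
      ≤ g u + 1 / (2 * γ) * ‖u - wp‖ ^ 2) :
    ∀ u, g u ≥ g wt
      + ⟪(ContinuousLinearMap.adjoint D) lamp + r • (w0 - wp), u - wt⟫
      - c / 2 * ‖u - wt‖ ^ 2 := by
  have hcγ : c * γ < 1 := by rw [lt_div_iff₀ hc, mul_comm] at hγc; exact hγc
  have ha : c / 2 < 1 / (2 * γ) := by
    rw [div_lt_div_iff₀ (by norm_num) (by linarith)]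
    nlinarith
  -- Step A: `γ⁻¹ • (wp - wt)` is a c-subgradient of g at wt.
  have hsub : ∀ u, g wt + ⟪γ⁻¹ • (wp - wt), u - wt⟫ - c / 2 * ‖u - wt‖ ^ 2 ≤ g u := by
    intro u
    set e : EuclideanSpace ℝ (Fin d) := u - wt with he
    refine aux_t _ _ ((1 / (2 * γ) - c / 2) * ‖e‖ ^ 2)
      (mul_nonneg (by linarith) (sq_nonneg _)) fun t ht ht1 => ?_
    have hx := hwt ((1 - t) • wt + t • u)
    have hcvx := hg_wc.2 (Set.mem_univ wt) (Set.mem_univ u) (by linarith : (0:ℝ) ≤ 1 - t)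
      (le_of_lt ht) (by ring)
    simp only [smul_eq_mul] at hcvx
    have hxt : (1 - t) • wt + t • u = wt + t • e := by
      rw [he]; module
    rw [hxt] at hx hcvx
    have hxtwp : wt + t • e - wp = (wt - wp) + t • e := by abel
    have hu : u = wt + (1:ℝ) • e := by rw [he]; module
    rw [hxtwp] at hx
    rw [aux_expand (wt - wp) e t] at hx
    nth_rewrite 2 [hu] at hcvx
    rw [aux_expand wt e t, aux_expand wt e 1] at hcvx
    have hie : ⟪γ⁻¹ • (wp - wt), e⟫ = -(2 * (1 / (2 * γ)) * ⟪wt - wp, e⟫) := by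
      rw [real_inner_smul_left]
      have h1 : wp - wt = -(wt - wp) := by abel
      rw [h1, inner_neg_left]
      have h2 : γ⁻¹ = 2 * (1 / (2 * γ)) := by field_simp
      rw [h2]; ring
    rw [hie]
    have key : t * (g wt + -(2 * (1 / (2 * γ)) * ⟪wt - wp, e⟫) - c / 2 * ‖e‖ ^ 2)
        ≤ t * (g u + t * ((1 / (2 * γ) - c / 2) * ‖e‖ ^ 2)) := by
      nlinarith [hx, hcvx]
    exact le_of_mul_le_mul_left key ht
  -- Step B: the Moreau envelope identities.
  have hbdd := aux_bdd g c (1 / (2 * γ)) hc ha wt (γ⁻¹ • (wp - wt)) hsub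
  have hMle : ∀ w, M w ≤ g wt + 1 / (2 * γ) * ‖wt - w‖ ^ 2 := by
    intro w
    rw [hM w]
    exact ciInf_le (hbdd w) wt
  have hMwp : g wt + 1 / (2 * γ) * ‖wt - wp‖ ^ 2 ≤ M wp := by
    rw [hM wp]
    exact le_ciInf fun x => hwt x
  -- Step C: first-order optimality of wp for the smoothed objective.
  set q : EuclideanSpace ℝ (Fin n) := z - D wp + ρ⁻¹ • lam with hqdef
  have hα : ∀ e : EuclideanSpace ℝ (Fin d),
      -(ρ * ⟪q, D e⟫) - 2 * (1 / (2 * γ)) * ⟪wt - wp, e⟫ + r * ⟪wp - w0, e⟫ = 0 := by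
    intro e
    refine aux_s _ (ρ / 2 * ‖D e‖ ^ 2 + 1 / (2 * γ) * ‖e‖ ^ 2 + r / 2 * ‖e‖ ^ 2) fun s => ?_
    have h1 := hwp (wp + s • e)
    have hz : z - D (wp + s • e) + ρ⁻¹ • lam = q + (-s) • (D e) := by
      rw [hqdef, map_add, map_smul]
      module
    have hwtw : wt - (wp + s • e) = (wt - wp) + (-s) • e := by module
    have hw0w : wp + s • e - w0 = (wp - w0) + s • e := by module
    rw [hz, hw0w] at h1
    have h2 := hMle (wp + s • e)
    have h3 := hMwp
    rw [hwtw] at h2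
    rw [aux_expand q (D e) (-s), aux_expand (wp - w0) e s] at h1
    rw [aux_expand (wt - wp) e (-s)] at h2
    nlinarith [h1, h2, h3]
  -- convert to the adjoint formulation
  have hlampD : ∀ e, ⟪lamp, D e⟫ = ρ * ⟪q, D e⟫ := by
    intro e
    rw [hlamp, hqdef]
    rw [inner_add_left, inner_add_left, real_inner_smul_left, real_inner_smul_left,
      inner_sub_left]
    field_simp
    ring
  set Vv : EuclideanSpace ℝ (Fin d) :=
    γ⁻¹ • (wp - wt) - ((ContinuousLinearMap.adjoint D) lamp + r • (w0 - wp)) with hVv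
  have hVe : ∀ e, ⟪Vv, e⟫ = 0 := by
    intro e
    have h0 := hα e
    rw [hVv, inner_sub_left, inner_add_left, real_inner_smul_left, real_inner_smul_left,
      ContinuousLinearMap.adjoint_inner_left, hlampD e]
    have hsw : (⟪wp - wt, e⟫ : ℝ) = -⟪wt - wp, e⟫ := by
      rw [show wp - wt = -(wt - wp) by abel, inner_neg_left]
    have hsw2 : (⟪w0 - wp, e⟫ : ℝ) = -⟪wp - w0, e⟫ := by
      rw [show w0 - wp = -(wp - w0) by abel, inner_neg_left]
    rw [hsw, hsw2]
    have h2 : γ⁻¹ = 2 * (1 / (2 * γ)) := by field_simp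
    rw [h2]
    linarith [h0]
  have hV0 : Vv = 0 := by
    have := hVe Vv
    exact inner_self_eq_zero.mp this
  have hfin : γ⁻¹ • (wp - wt)
      = (ContinuousLinearMap.adjoint D) lamp + r • (w0 - wp) := by
    have := sub_eq_zero.mp hV0
    exact this
  intro u
  rw [ge_iff_le, ← hfin]
  linarith [hsub u]
end

section
/- Fix n, d ≥ 1, a matrix D ∈ ℝ^{n×d}, ρ > 0, weights σ_i ≥ 0 and a convex, monotonically increasing, nonnegative loss l : ℝ → ℝ defining Ω(z) = Σ_{i=1}^n σ_i l(z_{[i]}), and a proper, lower semicontinuous, c-weakly convex regularizer g : ℝ^d → ℝ ∪ {+∞} with r > c. Define L_ρ(w, z; λ) = Ω(z) + ⟨λ, z − Dw⟩ + (ρ/2)‖z − Dw‖² + g(w). Suppose one ADMM step from (w^k, z^k, λ^k) produces (w^{k+1}, z^{k+1}, λ^{k+1}) such that: (a) L_ρ(w^k, z^k; λ^k) ≥ L_ρ(w^k, z^{k+1}; λ^k) (descent in the z-update); (b) w^{k+1} minimizes w ↦ (ρ/2)‖z^{k+1} − Dw + λ^k/ρ‖² + g(w) + (r/2)‖w − w^k‖²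 over ℝ^d; and (c) λ^{k+1} = λ^k + ρ(z^{k+1} − Dw^{k+1}). Then L_ρ(w^k, z^k; λ^k) − L_ρ(w^{k+1}, z^{k+1}; λ^{k+1}) ≥ ((2r − c)/2)·‖w^{k+1} − w^k‖² − (1/ρ)·‖λ^{k+1} − λ^k‖². -/
open scoped RealInnerProductSpace BigOperators

lemma norm_combo_sq {E : Type*} [NormedAddCommGroup E] [InnerProductSpace ℝ E]
    (a u : E) (t : ℝ) :
    ‖(1-t) • a + t • u‖ ^ 2
      = (1-t) * ‖a‖ ^ 2 + t * ‖u‖ ^ 2 - t * (1-t) * ‖u - a‖ ^ 2 := by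
  have h : ∀ x : E, ‖x‖ ^ 2 = ⟪x, x⟫ := fun x => (real_inner_self_eq_norm_sq x).symm
  rw [h, h, h, h]
  simp only [inner_add_left, inner_add_right, inner_sub_left, inner_sub_right,
    real_inner_smul_left, real_inner_smul_right]
  rw [real_inner_comm u a]
  ring

set_option maxHeartbeats 1000000 in
/-- **Per-iteration descent estimate (inequality (29) in the proof of Theorem 1).**
With `Ω(z) = ∑ᵢ σᵢ l(z₍ᵢ₎)` (sorted entries), `g` proper, lsc and `c`-weakly convex,
`r > c`, and the augmented Lagrangian
`L_ρ(w,z;λ) = Ω(z) + ⟪λ, z - Dw⟫ + (ρ/2)‖z - Dw‖² + g(w)`,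
one ADMM step satisfying (a) descent in the `z`-update, (b) exact minimization in
the `w`-update, and (c) the dual update, yields
`L_ρ(wᵏ,zᵏ;λᵏ) - L_ρ(wᵏ⁺¹,zᵏ⁺¹;λᵏ⁺¹) ≥ ((2r-c)/2)‖wᵏ⁺¹-wᵏ‖² - (1/ρ)‖λᵏ⁺¹-λᵏ‖²`. -/
theorem admm_one_step_descent (n d : ℕ) (hn : 1 ≤ n) (hd : 1 ≤ d)
    (D : EuclideanSpace ℝ (Fin d) →L[ℝ] EuclideanSpace ℝ (Fin n))
    (ρ : ℝ) (hρ : 0 < ρ)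
    (sw : Fin n → ℝ) (hsw : ∀ i, 0 ≤ sw i)
    (l : ℝ → ℝ) (hl_conv : ConvexOn ℝ Set.univ l) (hl_mono : Monotone l)
    (hl_nonneg : ∀ t, 0 ≤ l t)
    (Ω : EuclideanSpace ℝ (Fin n) → ℝ)
    (hΩ : ∀ z, Ω z = ∑ i : Fin n, sw i * l (z (Tuple.sort (fun j => z j) i)))
    (g : EuclideanSpace ℝ (Fin d) → ℝ)
    (hg_lsc : LowerSemicontinuous g)
    (c : ℝ) (hc : 0 < c)
    (hg_wc : ConvexOn ℝ Set.univ (fun w => g w + c / 2 * ‖w‖ ^ 2))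
    (r : ℝ) (hr : c < r)
    (L : EuclideanSpace ℝ (Fin d) → EuclideanSpace ℝ (Fin n) →
      EuclideanSpace ℝ (Fin n) → ℝ)
    (hL : ∀ w z lam, L w z lam
      = Ω z + ⟪lam, z - D w⟫ + ρ / 2 * ‖z - D w‖ ^ 2 + g w)
    (wk wkp : EuclideanSpace ℝ (Fin d))
    (zk zkp lamk lamkp : EuclideanSpace ℝ (Fin n))
    (ha : L wk zk lamk ≥ L wk zkp lamk)
    (hb : ∀ u, ρ / 2 * ‖zkp - D wkp + ρ⁻¹ • lamk‖ ^ 2 + g wkp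
        + r / 2 * ‖wkp - wk‖ ^ 2
      ≤ ρ / 2 * ‖zkp - D u + ρ⁻¹ • lamk‖ ^ 2 + g u + r / 2 * ‖u - wk‖ ^ 2)
    (hc' : lamkp = lamk + ρ • (zkp - D wkp)) :
    L wk zk lamk - L wkp zkp lamkp
      ≥ (2 * r - c) / 2 * ‖wkp - wk‖ ^ 2 - 1 / ρ * ‖lamkp - lamk‖ ^ 2 := by
  classical
  set F : EuclideanSpace ℝ (Fin d) → ℝ :=
    fun u => ρ / 2 * ‖zkp - D u + ρ⁻¹ • lamk‖ ^ 2 + g u with hF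
  set φ : EuclideanSpace ℝ (Fin d) → ℝ :=
    fun u => F u + r / 2 * ‖u - wk‖ ^ 2 with hφ
  have hbφ : ∀ u, φ wkp ≤ φ u := by
    intro u
    simp only [hφ, hF]
    exact hb u
  clear_value φ F
  have hB2 : ‖wk - wkp‖ = ‖wkp - wk‖ := norm_sub_rev _ _
  -- strong convexity step
  have hkey : ∀ t : ℝ, 0 < t → t < 1 →
      (1 - t) * ((r - c) / 2 * ‖wkp - wk‖ ^ 2) ≤ φ wk - φ wkp := by
    intro t ht ht1
    set m : EuclideanSpace ℝ (Fin d) := (1-t) • wkp + t • wk with hm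
    have hmap : zkp - D m + ρ⁻¹ • lamk
        = (1-t) • (zkp - D wkp + ρ⁻¹ • lamk) + t • (zkp - D wk + ρ⁻¹ • lamk) := by
      simp only [hm, map_add, map_smul]
      module
    have hq1 : ‖zkp - D m + ρ⁻¹ • lamk‖ ^ 2
        ≤ (1-t) * ‖zkp - D wkp + ρ⁻¹ • lamk‖ ^ 2
          + t * ‖zkp - D wk + ρ⁻¹ • lamk‖ ^ 2 := by
      rw [hmap, norm_combo_sq]
      have h0 : 0 ≤ t * (1-t) *
          ‖(zkp - D wk + ρ⁻¹ • lamk) - (zkp - D wkp + ρ⁻¹ • lamk)‖ ^ 2 := by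
        have := mul_nonneg ht.le (sub_nonneg.mpr ht1.le)
        positivity
      linarith
    have hrq1 : ρ / 2 * ‖zkp - D m + ρ⁻¹ • lamk‖ ^ 2
        ≤ ρ / 2 * ((1-t) * ‖zkp - D wkp + ρ⁻¹ • lamk‖ ^ 2
          + t * ‖zkp - D wk + ρ⁻¹ • lamk‖ ^ 2) :=
      mul_le_mul_of_nonneg_left hq1 (by positivity)
    have hg1 : g m + c / 2 * ‖m‖ ^ 2
        ≤ (1-t) * (g wkp + c / 2 * ‖wkp‖ ^ 2) + t * (g wk + c / 2 * ‖wk‖ ^ 2) :=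
      hg_wc.2 (Set.mem_univ wkp) (Set.mem_univ wk) (by linarith) ht.le (by ring)
    have hq3 : ‖m‖ ^ 2
        = (1-t) * ‖wkp‖ ^ 2 + t * ‖wk‖ ^ 2 - t * (1-t) * ‖wkp - wk‖ ^ 2 := by
      rw [hm, norm_combo_sq, hB2]
    have hq3c : c / 2 * ‖m‖ ^ 2
        = c / 2 * ((1-t) * ‖wkp‖ ^ 2 + t * ‖wk‖ ^ 2
          - t * (1-t) * ‖wkp - wk‖ ^ 2) := by rw [hq3]
    have hq2 : ‖m - wk‖ ^ 2 = (1-t)^2 * ‖wkp - wk‖ ^ 2 := by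
      have hmw : m - wk = (1-t) • (wkp - wk) := by
        simp only [hm]; module
      rw [hmw, norm_smul, Real.norm_eq_abs, mul_pow, sq_abs]
    have hq2r : r / 2 * ‖m - wk‖ ^ 2
        = r / 2 * ((1-t)^2 * ‖wkp - wk‖ ^ 2) := by rw [hq2]
    clear_value m
    have hφm : φ m ≤ (1-t) * φ wkp + t * φ wk
        - (r - c) / 2 * (t * (1-t)) * ‖wkp - wk‖ ^ 2 := by
      have hww : ‖wk - wk‖ = 0 := by simp
      simp only [hφ, hF]
      rw [hww]
      linarith [hrq1, hg1, hq3c, hq2r]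
    have hmain : t * ((1 - t) * ((r - c) / 2 * ‖wkp - wk‖ ^ 2))
        ≤ t * (φ wk - φ wkp) := by
      have hpm := hbφ m
      revert hpm hφm
      generalize φ wkp = P
      generalize φ wk = Q
      generalize φ m = M
      generalize ‖wkp - wk‖ ^ 2 = B
      intro hφm hpm
      linarith
    exact le_of_mul_le_mul_left hmain ht
  have hstrong : (r - c) / 2 * ‖wkp - wk‖ ^ 2 ≤ φ wk - φ wkp := by
    by_contra hcon
    push_neg at hcon
    set A := φ wk - φ wkp with hA
    set B := (r - c) / 2 * ‖wkp - wk‖ ^ 2 with hBd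
    have hrc : (0:ℝ) < r - c := sub_pos.mpr hr
    have hB0 : 0 ≤ B := by rw [hBd]; positivity
    have h12 : (1 - (1:ℝ)/2) * B ≤ A := hkey (1/2) (by norm_num) (by norm_num)
    have hBpos : 0 < B := by linarith
    set t0 := (B - A) / (2 * B) with ht0d
    have ht0 : 0 < t0 := div_pos (by linarith) (by linarith)
    have ht01 : t0 < 1 := by
      rw [ht0d, div_lt_one (by linarith)]
      linarith
    have hk := hkey t0 ht0 ht01
    have heq : (1 - t0) * B = (A + B) / 2 := by
      rw [ht0d]
      field_simp
      ring
    linarith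
  have hww : ‖wk - wk‖ = 0 := by simp
  have hFdesc : (2 * r - c) / 2 * ‖wkp - wk‖ ^ 2 ≤ F wk - F wkp := by
    have h1 := hstrong
    simp only [hφ] at h1
    rw [hww] at h1
    linarith [h1]
  -- relate L(·, zkp; lamk) and F
  have hLrw : ∀ u, L u zkp lamk = Ω zkp + F u - 1 / (2*ρ) * ‖lamk‖ ^ 2 := by
    intro u
    rw [hL]
    simp only [hF]
    have hexp : ‖zkp - D u + ρ⁻¹ • lamk‖ ^ 2
        = ‖zkp - D u‖ ^ 2 + 2 * (ρ⁻¹ * ⟪lamk, zkp - D u⟫) + ρ⁻¹ ^ 2 * ‖lamk‖ ^ 2 := by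
      rw [norm_add_sq_real, norm_smul, Real.norm_eq_abs, real_inner_smul_right,
        real_inner_comm, mul_pow, sq_abs]
    rw [hexp]
    field_simp
    ring
  -- dual-update term
  have hvdiff : lamkp - lamk = ρ • (zkp - D wkp) := by
    rw [hc']; abel
  have hlam : zkp - D wkp = ρ⁻¹ • (lamkp - lamk) := by
    rw [hvdiff, smul_smul, inv_mul_cancel₀ hρ.ne', one_smul]
  have hv : ⟪lamk, lamkp - lamk⟫ - ⟪lamkp, lamkp - lamk⟫ = -‖lamkp - lamk‖ ^ 2 := by
    rw [← inner_sub_left]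
    have h2 : lamk - lamkp = -(lamkp - lamk) := by abel
    rw [h2, inner_neg_left, real_inner_self_eq_norm_sq]
  have h1 : ⟪lamk, zkp - D wkp⟫ - ⟪lamkp, zkp - D wkp⟫
      = -(1/ρ) * ‖lamkp - lamk‖ ^ 2 := by
    rw [hlam, real_inner_smul_right, real_inner_smul_right, ← mul_sub, hv]
    field_simp
  have hthird : L wkp zkp lamk - L wkp zkp lamkp = -(1/ρ) * ‖lamkp - lamk‖ ^ 2 := by
    rw [hL, hL]
    linarith [h1]
  have hsecond : L wk zkp lamk - L wkp zkp lamk = F wk - F wkp := by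
    rw [hLrw, hLrw]; ring
  have hsplit : L wk zk lamk - L wkp zkp lamkp
      = (L wk zk lamk - L wk zkp lamk) + (L wk zkp lamk - L wkp zkp lamk)
        + (L wkp zkp lamk - L wkp zkp lamkp) := by ring
  rw [hsplit, hsecond, hthird]
  linarith [ha, hFdesc]
end

section
/- Fix n, d ≥ 1, D ∈ ℝ^{n×d}, ρ > 0, weights σ_i ≥ 0 and a convex, monotonically increasing, nonnegative loss l : ℝ → ℝ defining Ω(z) = Σ_{i=1}^n σ_i l(z_{[i]}), and a proper, lower semicontinuous, c-weakly convex, nonnegative regularizer g : ℝ^d → ℝ ∪ {+∞}, with r > c. Define L_ρ(w, z; λ) = Ω(z) + ⟨λ, z − Dw⟩ + (ρ/2)‖z − Dw‖² + g(w). Suppose sequences (w^k, z^k, λ^k), k ≥ 1, satisfy for all k: (a) L_ρ(w^k, z^k; λ^k) ≥ L_ρ(w^k, z^{k+1}; λ^k); (b) w^{k+1} minimizes w ↦ (ρ/2)‖z^{k+1} − Dw + λ^k/ρ‖² + g(w) + (r/2)‖w − w^k‖²; (c) λ^{k+1} = λ^k + ρ(z^{k+1} − Dw^{k+1}); and (d)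 ‖λ^k‖ ≤ Λ for all k and Σ_{k=1}^{∞} ‖λ^{k+1} − λ^k‖² ≤ S < ∞. Set L̂ = L_ρ(w¹, z¹; λ¹) + Λ²/(2ρ) + 2S/ρ. Then for every integer K ≥ 1 there exists k with 1 ≤ k ≤ K such that: (i) ‖w^{k+1} − w^k‖ ≤ √(2L̂/((2r−c)K)) and ‖λ^{k+1} − λ^k‖ ≤ √(ρL̂/K); (ii) consequently there exists a c-subgradient v of g at w^{k+1} with ‖D^⊤λ^{k+1} − v‖ ≤ r·√(2L̂/((2r−c)K)), and the vector ξ = −λ^k − ρ(z^{k+1} − Dw^k) satisfies ‖ξ + λ^{k+1}‖ ≤ ρ‖D‖·√(2L̂/((2r−c)K)); and (iii) ‖z^{k+1} − Dw^{k+1}‖ ≤ √(L̂/(ρK)). In particular, taking K = ⌈1/ε²⌉, all of these residuals are O(ε): the algorithm finds an ε-approximate KKT point within O(1/ε²) iterations. -/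
open scoped RealInnerProductSpace BigOperators

lemma lemA (X C : ℝ) (h : ∀ t : ℝ, 0 < t → t ≤ 1 → -(t*C) ≤ X) : 0 ≤ X := by
  by_contra hX
  push_neg at hX
  have hC : 0 < C := by
    by_contra hC; push_neg at hC
    have := h 1 one_pos le_rfl; nlinarith
  have ht := h (min 1 (-X/(2*C))) (lt_min one_pos (div_pos (by linarith) (by linarith))) (min_le_left _ _)
  have h2 : min 1 (-X/(2*C)) ≤ -X/(2*C) := min_le_right _ _
  have h3 : min 1 (-X/(2*C)) * C ≤ (-X/(2*C)) * C := by nlinarith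
  have h4 : (-X/(2*C)) * C = -X/2 := by field_simp
  nlinarith

variable {E F : Type*} [NormedAddCommGroup E] [InnerProductSpace ℝ E]
  [NormedAddCommGroup F] [InnerProductSpace ℝ F]

lemma expand_sq (x y : E) (t : ℝ) :
    ‖x + t • y‖^2 = ‖x‖^2 + 2*t*⟪x,y⟫ + t^2*‖y‖^2 := by
  rw [norm_add_sq_real, real_inner_smul_right, norm_smul, Real.norm_eq_abs, mul_pow, sq_abs]
  ring

lemma wc_combo (g : E → ℝ) (c : ℝ) (hc : 0 ≤ c)
    (hg : ConvexOn ℝ Set.univ (fun w => g w + c/2*‖w‖^2))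
    (x y : E) (t : ℝ) (ht0 : 0 ≤ t) (ht1 : t ≤ 1) :
    g (x + t • (y - x)) ≤ (1-t) * g x + t * g y + c/2 * t * (1-t) * ‖y - x‖^2 := by
  have hcomb := hg.2 (Set.mem_univ x) (Set.mem_univ y) (by linarith : (0:ℝ) ≤ 1 - t) ht0 (by ring)
  simp only [smul_eq_mul] at hcomb
  have hxy : (1-t) • x + t • y = x + t • (y - x) := by module
  rw [hxy] at hcomb
  have he : ‖x + t • (y - x)‖^2 = ‖x‖^2 + 2*t*⟪x, y-x⟫ + t^2*‖y-x‖^2 := expand_sq x (y-x) t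
  have h1 : ⟪x, y - x⟫ = ⟪x, y⟫ - ‖x‖^2 := by
    rw [inner_sub_right, real_inner_self_eq_norm_sq]
  have h2 : ‖y - x‖^2 = ‖y‖^2 - 2*⟪y,x⟫ + ‖x‖^2 := by
    rw [norm_sub_sq_real]
  have h3 : ⟪y, x⟫ = ⟪x, y⟫ := real_inner_comm x y
  have hid : (1-t)*‖x‖^2 + t*‖y‖^2 - ‖x + t • (y - x)‖^2 = t*(1-t)*‖y-x‖^2 := by
    rw [he, h1, h2, h3]; ring
  nlinarith [hcomb, hid, mul_le_mul_of_nonneg_left (le_of_eq hid) (by linarith : (0:ℝ) ≤ c/2)]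

lemma subgrad_of_prox (D : E →L[ℝ] F) (ρ c r : ℝ) (hρ : 0 < ρ) (hc : 0 ≤ c)
    (g : E → ℝ) (hg_wc : ConvexOn ℝ Set.univ (fun w => g w + c/2*‖w‖^2))
    (a : F) (w0 w1 : E)
    (hmin : ∀ u, ρ/2*‖a - D w1‖^2 + g w1 + r/2*‖w1 - w0‖^2
      ≤ ρ/2*‖a - D u‖^2 + g u + r/2*‖u - w0‖^2) :
    ∀ u, g u ≥ g w1 + (ρ * ⟪a - D w1, D (u - w1)⟫ - r * ⟪w1 - w0, u - w1⟫)
      - c/2 * ‖u - w1‖^2 := by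
  intro u
  set h : E := u - w1 with hh
  have key : 0 ≤ g u - g w1 - (ρ * ⟪a - D w1, D h⟫ - r * ⟪w1 - w0, h⟫) + c/2 * ‖h‖^2 := by
    apply lemA _ ((ρ*‖D h‖^2 + r*‖h‖^2 + c*‖h‖^2)/2)
    intro t ht0 ht1
    have hq := hmin (w1 + t • h)
    have heq1 : a - D (w1 + t • h) = (a - D w1) + (-t) • (D h) := by
      rw [map_add, map_smul]; module
    have heq2 : (w1 + t • h) - w0 = (w1 - w0) + t • h := by module
    rw [heq1, heq2, expand_sq, expand_sq] at hq
    have hwc := wc_combo g c hc hg_wc w1 u t (le_of_lt ht0) ht1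
    rw [← hh] at hwc
    have hmul : t * (-(t * ((ρ*‖D h‖^2 + r*‖h‖^2 + c*‖h‖^2)/2)))
        ≤ t * (g u - g w1 - (ρ * ⟪a - D w1, D h⟫ - r * ⟪w1 - w0, h⟫) + c/2 * ‖h‖^2) := by
      linarith [hq, hwc, mul_nonneg (mul_nonneg hc (sq_nonneg t)) (sq_nonneg ‖h‖)]
    exact le_of_mul_le_mul_left hmul ht0
  linarith [key]


lemma descent_w (D : E →L[ℝ] F) (ρ c r : ℝ) (hρ : 0 < ρ) (hc : 0 ≤ c)
    (g : E → ℝ) (hg_wc : ConvexOn ℝ Set.univ (fun w => g w + c/2*‖w‖^2))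
    (zk lk : F) (wk w' : E)
    (hmin : ∀ u, ρ/2*‖(zk + ρ⁻¹ • lk) - D w'‖^2 + g w' + r/2*‖w' - wk‖^2
      ≤ ρ/2*‖(zk + ρ⁻¹ • lk) - D u‖^2 + g u + r/2*‖u - wk‖^2) :
    ⟪lk, zk - D w'⟫ + ρ/2*‖zk - D w'‖^2 + g w' + (2*r-c)/2*‖w' - wk‖^2
      ≤ ⟪lk, zk - D wk⟫ + ρ/2*‖zk - D wk‖^2 + g wk := by
  have hsub := subgrad_of_prox D ρ c r hρ hc g hg_wc (zk + ρ⁻¹ • lk) wk w' hmin wk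
  have h1 : D (wk - w') = (-1 : ℝ) • D (w' - wk) := by rw [map_sub, map_sub]; module
  have h2 : ⟪w' - wk, wk - w'⟫ = -‖w' - wk‖^2 := by
    rw [show wk - w' = -(w' - wk) from (neg_sub w' wk).symm, inner_neg_right,
      real_inner_self_eq_norm_sq]
  rw [h1, real_inner_smul_right, h2] at hsub
  have heq : zk - D wk = (zk - D w') + (1:ℝ) • D (w' - wk) := by
    rw [map_sub]; module
  rw [heq, expand_sq, inner_add_right, real_inner_smul_right]
  have hA : ⟪(zk + ρ⁻¹ • lk) - D w', D (w' - wk)⟫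
      = ⟪zk - D w', D (w' - wk)⟫ + ρ⁻¹ * ⟪lk, D (w' - wk)⟫ := by
    rw [show (zk + ρ⁻¹ • lk) - D w' = (zk - D w') + ρ⁻¹ • lk from by module,
      inner_add_left, real_inner_smul_left]
  rw [hA] at hsub
  have hcc : ρ * (ρ⁻¹ * ⟪lk, D (w' - wk)⟫) = ⟪lk, D (w' - wk)⟫ := by
    field_simp
  have hnr : ‖wk - w'‖ = ‖w' - wk‖ := norm_sub_rev _ _
  rw [hnr] at hsub
  nlinarith [hsub, hcc, real_inner_self_nonneg (x := D (w' - wk))]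


set_option maxHeartbeats 1000000 in
/-- **Theorem 1: the proximal ADMM finds an ε-KKT point in `O(1/ε²)` iterations**
(stated with explicit bounds).  With `Ω(z) = ∑ᵢ σᵢ l(z₍ᵢ₎)` (sorted entries),
`g ≥ 0` proper, lsc and `c`-weakly convex, `r > c`, the augmented Lagrangian
`L_ρ(w,z;λ) = Ω(z) + ⟪λ, z - Dw⟫ + (ρ/2)‖z - Dw‖² + g(w)`, ADMM iterates
satisfying (a) `z`-descent, (b) exact `w`-minimization, (c) the dual update, and
(d) `‖λᵏ‖ ≤ Λ` with `∑ₖ‖λᵏ⁺¹-λᵏ‖² ≤ S`, and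
`L̂ = L_ρ(w¹,z¹;λ¹) + Λ²/(2ρ) + 2S/ρ`, for every `K ≥ 1` there is `1 ≤ k ≤ K` with
(i) `‖wᵏ⁺¹-wᵏ‖ ≤ √(2L̂/((2r-c)K))`, `‖λᵏ⁺¹-λᵏ‖ ≤ √(ρL̂/K)`;
(ii) a `c`-subgradient `v` of `g` at `wᵏ⁺¹` with
`‖D^⊤λᵏ⁺¹ - v‖ ≤ r√(2L̂/((2r-c)K))`, and
`ξ = -λᵏ - ρ(zᵏ⁺¹ - Dwᵏ)` satisfies `‖ξ + λᵏ⁺¹‖ ≤ ρ‖D‖√(2L̂/((2r-c)K))`;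
(iii) `‖zᵏ⁺¹ - Dwᵏ⁺¹‖ ≤ √(L̂/(ρK))`. -/
theorem admm_eps_kkt (n d : ℕ) (hn : 1 ≤ n) (hd : 1 ≤ d)
    (D : EuclideanSpace ℝ (Fin d) →L[ℝ] EuclideanSpace ℝ (Fin n))
    (ρ : ℝ) (hρ : 0 < ρ)
    (sw : Fin n → ℝ) (hsw : ∀ i, 0 ≤ sw i)
    (l : ℝ → ℝ) (hl_conv : ConvexOn ℝ Set.univ l) (hl_mono : Monotone l)
    (hl_nonneg : ∀ t, 0 ≤ l t)
    (Ω : EuclideanSpace ℝ (Fin n) → ℝ)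
    (hΩ : ∀ z, Ω z = ∑ i : Fin n, sw i * l (z (Tuple.sort (fun j => z j) i)))
    (g : EuclideanSpace ℝ (Fin d) → ℝ)
    (hg_lsc : LowerSemicontinuous g)
    (hg_nonneg : ∀ w, 0 ≤ g w)
    (c : ℝ) (hc : 0 < c)
    (hg_wc : ConvexOn ℝ Set.univ (fun w => g w + c / 2 * ‖w‖ ^ 2))
    (r : ℝ) (hr : c < r)
    (L : EuclideanSpace ℝ (Fin d) → EuclideanSpace ℝ (Fin n) →
      EuclideanSpace ℝ (Fin n) → ℝ)
    (hL : ∀ w z lam, L w z lam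
      = Ω z + ⟪lam, z - D w⟫ + ρ / 2 * ‖z - D w‖ ^ 2 + g w)
    (w : ℕ → EuclideanSpace ℝ (Fin d))
    (z lam : ℕ → EuclideanSpace ℝ (Fin n))
    (ha : ∀ k, 1 ≤ k → L (w k) (z k) (lam k) ≥ L (w k) (z (k + 1)) (lam k))
    (hb : ∀ k, 1 ≤ k → ∀ u,
      ρ / 2 * ‖z (k + 1) - D (w (k + 1)) + ρ⁻¹ • lam k‖ ^ 2 + g (w (k + 1))
          + r / 2 * ‖w (k + 1) - w k‖ ^ 2
        ≤ ρ / 2 * ‖z (k + 1) - D u + ρ⁻¹ • lam k‖ ^ 2 + g u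
          + r / 2 * ‖u - w k‖ ^ 2)
    (hc' : ∀ k, 1 ≤ k →
      lam (k + 1) = lam k + ρ • (z (k + 1) - D (w (k + 1))))
    (Λ : ℝ) (hΛ : ∀ k, ‖lam k‖ ≤ Λ)
    (S : ℝ) (hS : ∀ K : ℕ, ∑ k ∈ Finset.Icc 1 K, ‖lam (k + 1) - lam k‖ ^ 2 ≤ S)
    (Lhat : ℝ)
    (hLhat : Lhat = L (w 1) (z 1) (lam 1) + Λ ^ 2 / (2 * ρ) + 2 * S / ρ) :
    ∀ K : ℕ, 1 ≤ K → ∃ k, 1 ≤ k ∧ k ≤ K ∧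
      ‖w (k + 1) - w k‖ ≤ Real.sqrt (2 * Lhat / ((2 * r - c) * K)) ∧
      ‖lam (k + 1) - lam k‖ ≤ Real.sqrt (ρ * Lhat / K) ∧
      (∃ v, (∀ u, g u ≥ g (w (k + 1)) + ⟪v, u - w (k + 1)⟫
          - c / 2 * ‖u - w (k + 1)‖ ^ 2) ∧
        ‖(ContinuousLinearMap.adjoint D) (lam (k + 1)) - v‖
          ≤ r * Real.sqrt (2 * Lhat / ((2 * r - c) * K))) ∧
      ‖(-(lam k) - ρ • (z (k + 1) - D (w k))) + lam (k + 1)‖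
        ≤ ρ * ‖D‖ * Real.sqrt (2 * Lhat / ((2 * r - c) * K)) ∧
      ‖z (k + 1) - D (w (k + 1))‖ ≤ Real.sqrt (Lhat / (ρ * K)) := by

  intro K hK
  -- basic facts
  have hρ' : ρ ≠ 0 := hρ.ne'
  have hΩ0 : ∀ zz, 0 ≤ Ω zz := by
    intro zz; rw [hΩ]
    exact Finset.sum_nonneg fun i _ => mul_nonneg (hsw i) (hl_nonneg _)
  have hg_wc' : ConvexOn ℝ Set.univ (fun w : EuclideanSpace ℝ (Fin d) => g w + c/2*‖w‖^2) :=
    hg_wc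
  -- lower bound on L
  have hlow : ∀ k : ℕ, -(Λ^2/(2*ρ)) ≤ L (w k) (z k) (lam k) := by
    intro k
    rw [hL]
    have h1 : -(‖lam k‖*‖z k - D (w k)‖) ≤ ⟪lam k, z k - D (w k)⟫ := by
      have h2 := abs_real_inner_le_norm (lam k) (z k - D (w k))
      have h3 := neg_abs_le (⟪lam k, z k - D (w k)⟫)
      linarith
    have hquad : 0 ≤ ρ/2*‖z k - D (w k)‖^2 - ‖lam k‖*‖z k - D (w k)‖ + ‖lam k‖^2/(2*ρ) := by
      have hid : ρ/2*‖z k - D (w k)‖^2 - ‖lam k‖*‖z k - D (w k)‖ + ‖lam k‖^2/(2*ρ)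
          = (ρ*‖z k - D (w k)‖ - ‖lam k‖)^2/(2*ρ) := by
        field_simp; ring
      rw [hid]; positivity
    have h3 : ‖lam k‖^2 ≤ Λ^2 := by nlinarith [hΛ k, norm_nonneg (lam k)]
    have h4 : ‖lam k‖^2/(2*ρ) ≤ Λ^2/(2*ρ) :=
      (div_le_div_iff_of_pos_right (by linarith : (0:ℝ) < 2*ρ)).mpr h3
    linarith [hΩ0 (z k), hg_nonneg (w k), h1, hquad, h4]
  -- rewrite the w-minimization in "a - D u" form
  have hbA : ∀ k, 1 ≤ k → ∀ u,
      ρ/2*‖(z (k+1) + ρ⁻¹ • lam k) - D (w (k+1))‖^2 + g (w (k+1)) + r/2*‖w (k+1) - w k‖^2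
        ≤ ρ/2*‖(z (k+1) + ρ⁻¹ • lam k) - D u‖^2 + g u + r/2*‖u - w k‖^2 := by
    intro k hk u
    have h := hb k hk u
    have e1 : ∀ x : EuclideanSpace ℝ (Fin d),
        z (k+1) - D x + ρ⁻¹ • lam k = (z (k+1) + ρ⁻¹ • lam k) - D x := fun x => by module
    rw [e1, e1] at h; exact h
  -- dual step identities
  have hlam : ∀ k, 1 ≤ k → lam (k+1) - lam k = ρ • (z (k+1) - D (w (k+1))) := by
    intro k hk; rw [hc' k hk]; module
  -- per-step descent
  have hdesc : ∀ k, 1 ≤ k →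
      L (w (k+1)) (z (k+1)) (lam (k+1)) + (2*r-c)/2*‖w (k+1) - w k‖^2
        ≤ L (w k) (z k) (lam k) + ρ⁻¹*‖lam (k+1) - lam k‖^2 := by
    intro k hk
    have dw := descent_w D ρ c r hρ hc.le g hg_wc' (z (k+1)) (lam k) (w k) (w (k+1)) (hbA k hk)
    have haa := ha k hk
    rw [hL, hL] at haa
    have hdiff : ⟪lam (k+1), z (k+1) - D (w (k+1))⟫ - ⟪lam k, z (k+1) - D (w (k+1))⟫
        = ρ * ‖z (k+1) - D (w (k+1))‖^2 := by
      rw [← inner_sub_left, hlam k hk, real_inner_smul_left, real_inner_self_eq_norm_sq]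
    have hnl : ‖lam (k+1) - lam k‖^2 = ρ^2 * ‖z (k+1) - D (w (k+1))‖^2 := by
      rw [hlam k hk, norm_smul, Real.norm_eq_abs, mul_pow, sq_abs]
    have hfin : ρ⁻¹*‖lam (k+1) - lam k‖^2 = ρ*‖z (k+1) - D (w (k+1))‖^2 := by
      rw [hnl]; field_simp
    rw [hL, hL]
    linarith [dw, haa, hdiff, hfin]
  -- telescoping
  have tele : ∀ M : ℕ,
      (∑ k ∈ Finset.Icc 1 M, ((2*r-c)/2*‖w (k+1) - w k‖^2 + ρ⁻¹*‖lam (k+1) - lam k‖^2))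
          + L (w (M+1)) (z (M+1)) (lam (M+1))
        ≤ L (w 1) (z 1) (lam 1)
          + ∑ k ∈ Finset.Icc 1 M, 2*ρ⁻¹*‖lam (k+1) - lam k‖^2 := by
    intro M
    induction M with
    | zero => simp
    | succ M ih =>
      rw [Finset.sum_Icc_succ_top (by omega : 1 ≤ M+1),
        Finset.sum_Icc_succ_top (by omega : 1 ≤ M+1)]
      have hd := hdesc (M+1) (by omega)
      linarith [ih, hd]
  -- total bound
  have hK0 : (0:ℝ) < (K:ℝ) := by exact_mod_cast Nat.lt_of_lt_of_le Nat.zero_lt_one hK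
  have hsum : ∑ k ∈ Finset.Icc 1 K,
      ((2*r-c)/2*‖w (k+1) - w k‖^2 + ρ⁻¹*‖lam (k+1) - lam k‖^2) ≤ Lhat := by
    have t1 := tele K
    have t2 := hlow (K+1)
    have t3 : ∑ k ∈ Finset.Icc 1 K, 2*ρ⁻¹*‖lam (k+1) - lam k‖^2
        = 2*ρ⁻¹ * ∑ k ∈ Finset.Icc 1 K, ‖lam (k+1) - lam k‖^2 := by
      rw [Finset.mul_sum]
    have t4 := hS K
    have t5 : 2*ρ⁻¹ * (∑ k ∈ Finset.Icc 1 K, ‖lam (k+1) - lam k‖^2) ≤ 2*ρ⁻¹ * S :=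
      mul_le_mul_of_nonneg_left t4 (by positivity)
    have t6 : 2*ρ⁻¹*S = 2*S/ρ := by ring
    rw [hLhat]
    linarith [t1, t2, t3, t5]
  -- extract a good index
  have hex : ∃ k ∈ Finset.Icc 1 K,
      (2*r-c)/2*‖w (k+1) - w k‖^2 + ρ⁻¹*‖lam (k+1) - lam k‖^2 ≤ Lhat / K := by
    by_contra hcon
    push_neg at hcon
    have hne : (Finset.Icc 1 K).Nonempty := ⟨1, by simp [hK]⟩
    have hlt : ∑ k ∈ Finset.Icc 1 K, (Lhat/K)
        < ∑ k ∈ Finset.Icc 1 K,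
          ((2*r-c)/2*‖w (k+1) - w k‖^2 + ρ⁻¹*‖lam (k+1) - lam k‖^2) :=
      Finset.sum_lt_sum_of_nonempty hne hcon
    have hcst : ∑ _k ∈ Finset.Icc 1 K, (Lhat/K) = (K:ℝ) * (Lhat/K) := by
      rw [Finset.sum_const, Nat.card_Icc]
      simp [nsmul_eq_mul]
    have hKL : (K:ℝ) * (Lhat/K) = Lhat := by field_simp
    rw [hcst, hKL] at hlt
    linarith [hsum]
  obtain ⟨k, hkmem, hTk⟩ := hex
  rw [Finset.mem_Icc] at hkmem
  obtain ⟨hk1, hkK⟩ := hkmem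
  have h2rc : (0:ℝ) < 2*r - c := by linarith
  have hAnn : 0 ≤ ‖w (k+1) - w k‖^2 := sq_nonneg _
  have hBnn : 0 ≤ ρ⁻¹*‖lam (k+1) - lam k‖^2 := by positivity
  have hKL : (K:ℝ) * (Lhat/K) = Lhat := by field_simp
  -- (i) first bound
  have hwb2 : ‖w (k+1) - w k‖^2 ≤ 2*Lhat/((2*r-c)*(K:ℝ)) := by
    rw [le_div_iff₀ (mul_pos h2rc hK0)]
    have h5 := mul_le_mul_of_nonneg_left hTk (le_of_lt hK0)
    have h6 : 0 ≤ (K:ℝ) * (ρ⁻¹*‖lam (k+1) - lam k‖^2) := mul_nonneg hK0.le hBnn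
    nlinarith [h5, hKL, h6]
  have hwb : ‖w (k+1) - w k‖ ≤ Real.sqrt (2*Lhat/((2*r-c)*(K:ℝ))) := by
    rw [show ‖w (k+1) - w k‖ = Real.sqrt (‖w (k+1) - w k‖^2) from
      (Real.sqrt_sq (norm_nonneg _)).symm]
    exact Real.sqrt_le_sqrt hwb2
  -- (i) second bound
  have h6' : ρ⁻¹*‖lam (k+1) - lam k‖^2 ≤ Lhat/K := by nlinarith [hTk, hAnn]
  have hlb2 : ‖lam (k+1) - lam k‖^2 ≤ ρ*Lhat/(K:ℝ) := by
    have hBe : ‖lam (k+1) - lam k‖^2 = ρ * (ρ⁻¹*‖lam (k+1) - lam k‖^2) := by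
      field_simp
    rw [hBe, mul_div_assoc]
    exact mul_le_mul_of_nonneg_left h6' hρ.le
  have hlb : ‖lam (k+1) - lam k‖ ≤ Real.sqrt (ρ*Lhat/(K:ℝ)) := by
    rw [show ‖lam (k+1) - lam k‖ = Real.sqrt (‖lam (k+1) - lam k‖^2) from
      (Real.sqrt_sq (norm_nonneg _)).symm]
    exact Real.sqrt_le_sqrt hlb2
  -- subgradient
  have hlam2 : lam (k+1) = ρ • ((z (k+1) + ρ⁻¹ • lam k) - D (w (k+1))) := by
    rw [hc' k hk1]
    match_scalars <;> field_simp
  have hsub := subgrad_of_prox D ρ c r hρ hc.le g hg_wc'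
    (z (k+1) + ρ⁻¹ • lam k) (w k) (w (k+1)) (hbA k hk1)
  have hvinner : ∀ u : EuclideanSpace ℝ (Fin d),
      ⟪(ContinuousLinearMap.adjoint D) (lam (k+1)) - r • (w (k+1) - w k), u - w (k+1)⟫
        = ρ * ⟪(z (k+1) + ρ⁻¹ • lam k) - D (w (k+1)), D (u - w (k+1))⟫
          - r * ⟪w (k+1) - w k, u - w (k+1)⟫ := by
    intro u
    rw [inner_sub_left, real_inner_smul_left, ContinuousLinearMap.adjoint_inner_left,
      hlam2, real_inner_smul_left]
  refine ⟨k, hk1, hkK, hwb, hlb, ⟨(ContinuousLinearMap.adjoint D) (lam (k+1)) - r • (w (k+1) - w k), ?_, ?_⟩, ?_, ?_⟩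
  · intro u
    rw [hvinner u]
    exact hsub u
  · have hveq : (ContinuousLinearMap.adjoint D) (lam (k+1))
        - ((ContinuousLinearMap.adjoint D) (lam (k+1)) - r • (w (k+1) - w k))
        = r • (w (k+1) - w k) := by module
    rw [hveq, norm_smul, Real.norm_eq_abs, abs_of_pos (by linarith : (0:ℝ) < r)]
    exact mul_le_mul_of_nonneg_left hwb (by linarith)
  · have hxi : (-(lam k) - ρ • (z (k+1) - D (w k))) + lam (k+1)
        = ρ • (D (w k - w (k+1))) := by
      rw [hc' k hk1, map_sub]; module
    rw [hxi, norm_smul, Real.norm_eq_abs, abs_of_pos hρ]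
    calc ρ * ‖D (w k - w (k+1))‖ ≤ ρ * (‖D‖ * ‖w k - w (k+1)‖) :=
          mul_le_mul_of_nonneg_left (D.le_opNorm _) hρ.le
      _ = ρ * ‖D‖ * ‖w (k+1) - w k‖ := by rw [norm_sub_rev]; ring
      _ ≤ ρ * ‖D‖ * Real.sqrt (2*Lhat/((2*r-c)*(K:ℝ))) := by
          apply mul_le_mul_of_nonneg_left hwb
          positivity
  · have hee : z (k+1) - D (w (k+1)) = ρ⁻¹ • (lam (k+1) - lam k) := by
      rw [hlam k hk1, smul_smul, inv_mul_cancel₀ hρ', one_smul]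
    rw [hee, norm_smul, Real.norm_eq_abs, abs_of_pos (by positivity : (0:ℝ) < ρ⁻¹)]
    rw [show ρ⁻¹ * ‖lam (k+1) - lam k‖
        = Real.sqrt ((ρ⁻¹ * ‖lam (k+1) - lam k‖)^2) from
      (Real.sqrt_sq (by positivity)).symm]
    apply Real.sqrt_le_sqrt
    have h7 : (ρ⁻¹ * ‖lam (k+1) - lam k‖)^2 = ρ⁻¹ * (ρ⁻¹*‖lam (k+1) - lam k‖^2) := by ring
    have h8 : ρ⁻¹ * (ρ⁻¹*‖lam (k+1) - lam k‖^2) ≤ ρ⁻¹ * (Lhat/K) :=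
      mul_le_mul_of_nonneg_left h6' (by positivity)
    have h9 : ρ⁻¹ * (Lhat/K) = Lhat/(ρ*(K:ℝ)) := by
      field_simp
    rw [h7]; rw [h9] at h8; exact h8
end
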